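/- arXiv:1603.03700 — 6 statements merged into one kernel-verified Lean document; each statement's English description precedes it below -/
import Mathlib

section
/- For every positive integer m, (π/(2m))² · Σ_{k=1}^{m-1} cos⁻²(kπ/(2m)) = (π²/6)·(1 − 1/m²). -/
open Real Finset

open Finset Polynomial Real


lemma sum_range_even_odd {M : Type*} [AddCommMonoid M] (f : ℕ → M) (n : ℕ) :
    ∑ k ∈ range (2*n), f k = ∑ j ∈ range n, f (2*j) + ∑ j ∈ range n, f (2*j+1) := by
  induction n with
  | zero => simp
  | succ n ih =>
    rw [mul_add, mul_one, sum_range_succ, sum_range_succ, sum_range_succ, sum_range_succ, ih]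
    abel

lemma sin_expand (n : ℕ) (θ : ℝ) :
    Real.sin ((2*n) * θ) = ∑ j ∈ range n,
      (-1:ℝ)^j * ((2*n).choose (2*j+1)) * Real.sin θ ^ (2*j+1) * Real.cos θ ^ (2*n - (2*j+1)) := by
  have h := Complex.cos_add_sin_mul_I_pow (2*n) (θ:ℂ)
  have h2 : ((Real.sin θ:ℂ)*Complex.I + (Real.cos θ:ℂ))^(2*n)
      = ((Real.cos ((2*n)*θ):ℝ):ℂ) + ((Real.sin ((2*n)*θ):ℝ):ℂ) * Complex.I := by
    rw [add_comm]
    simpa [Complex.ofReal_cos, Complex.ofReal_sin, push_cast] using h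
  rw [add_pow] at h2
  have him := congrArg Complex.im h2
  rw [Complex.im_sum, sum_range_succ, sum_range_even_odd] at him
  have hIe : ∀ j : ℕ, Complex.I ^ (2*j) = ((-1:ℂ))^j := by
    intro j; rw [pow_mul, Complex.I_sq]
  have heven : ∀ j : ℕ, ((Real.sin θ:ℂ)*Complex.I)^(2*j) * (Real.cos θ:ℂ)^(2*n-2*j)
      * ((2*n).choose (2*j) : ℂ)
      = (((-1:ℝ)^j * Real.sin θ^(2*j) * Real.cos θ^(2*n-2*j) * ((2*n).choose (2*j)) : ℝ) : ℂ) := by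
    intro j; rw [mul_pow, hIe]; push_cast; ring
  have hodd : ∀ j : ℕ, ((Real.sin θ:ℂ)*Complex.I)^(2*j+1) * (Real.cos θ:ℂ)^(2*n-(2*j+1))
      * ((2*n).choose (2*j+1) : ℂ)
      = (((-1:ℝ)^j * ((2*n).choose (2*j+1)) * Real.sin θ^(2*j+1) * Real.cos θ^(2*n-(2*j+1)) : ℝ) : ℂ)
        * Complex.I := by
    intro j
    rw [mul_pow, show Complex.I^(2*j+1) = ((-1:ℂ))^j * Complex.I by rw [pow_succ, hIe]]
    push_cast; ring
  simp only [heven, hodd, Complex.ofReal_im, Finset.sum_const_zero, Complex.mul_I_im,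
    Complex.ofReal_re, Complex.add_im] at him
  linarith

lemma esymm_one' (s : Multiset ℝ) : s.esymm 1 = s.sum := by
  simp [Multiset.esymm, Multiset.powersetCard_one, Multiset.map_map]

lemma six_mul_choose_three (n : ℕ) : 6 * n.choose 3 = n * (n-1) * (n-2) := by
  have h := Nat.descFactorial_eq_factorial_mul_choose n 3
  simp [Nat.descFactorial_succ, Nat.factorial] at h
  rw [← h]; ring

theorem tan_sq_sum (m : ℕ) (hm : 2 ≤ m) :
    ∑ k ∈ Finset.Icc 1 (m - 1), Real.tan (k * π / (2 * m)) ^ 2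
      = ((2*(m:ℝ)-1) * ((m:ℝ)-1)) / 3 := by
  have hm0 : (0:ℝ) < m := by positivity
  set P : Polynomial ℝ := ∑ j ∈ range m, C ((-1:ℝ)^j * ((2*m).choose (2*j+1))) * X^j with hP
  have hcoeff : ∀ i : ℕ, P.coeff i
      = if i < m then (-1:ℝ)^i * ((2*m).choose (2*i+1)) else 0 := by
    intro i
    rw [hP, finset_sum_coeff]
    simp only [coeff_C_mul, coeff_X_pow, mul_ite, mul_one, mul_zero]
    rw [Finset.sum_ite_eq (range m) i]
    simp [Finset.mem_range]
  set f : ℕ → ℝ := fun k => Real.tan (k * π / (2 * m)) ^ 2 with hf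
  have hθmem : ∀ k ∈ Finset.Icc 1 (m-1),
      (0:ℝ) < k * π / (2 * m) ∧ k * π / (2 * m) < π / 2 := by
    intro k hk
    rw [Finset.mem_Icc] at hk
    have hk1 : (1:ℝ) ≤ k := by exact_mod_cast hk.1
    have hkm : (k:ℝ) < m := by
      have : k < m := by omega
      exact_mod_cast this
    constructor
    · positivity
    · rw [div_lt_iff₀ (by positivity)]
      calc (k:ℝ) * π < m * π := by nlinarith [Real.pi_pos]
      _ = π / 2 * (2 * m) := by ring
  have htpos : ∀ k ∈ Finset.Icc 1 (m-1), 0 < Real.tan (k * π / (2 * m)) := by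
    intro k hk
    obtain ⟨h1, h2⟩ := hθmem k hk
    exact Real.tan_pos_of_pos_of_lt_pi_div_two h1 h2
  have hcpos : ∀ k ∈ Finset.Icc 1 (m-1), 0 < Real.cos (k * π / (2 * m)) := by
    intro k hk
    obtain ⟨h1, h2⟩ := hθmem k hk
    exact Real.cos_pos_of_mem_Ioo ⟨by linarith [Real.pi_pos], h2⟩
  have hroot : ∀ k ∈ Finset.Icc 1 (m-1), P.IsRoot (f k) := by
    intro k hk
    set θ := (k:ℝ) * π / (2 * m) with hθ
    have hc := hcpos k hk
    have ht := htpos k hk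
    have hsin0 : Real.sin (2 * (m:ℝ) * θ) = 0 := by
      rw [show 2 * (m:ℝ) * θ = k * π by rw [hθ]; field_simp]
      exact Real.sin_nat_mul_pi k
    have hexp := sin_expand m θ
    rw [hsin0] at hexp
    have hterm : ∀ j ∈ range m,
        (-1:ℝ)^j * ((2*m).choose (2*j+1)) * Real.sin θ ^ (2*j+1) * Real.cos θ ^ (2*m - (2*j+1))
        = Real.cos θ ^ (2*m) * Real.tan θ
            * ((-1:ℝ)^j * ((2*m).choose (2*j+1)) * (Real.tan θ ^ 2)^j) := by
      intro j hj
      rw [Finset.mem_range] at hj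
      have hpow : Real.cos θ ^ (2*m) = Real.cos θ ^ (2*m - (2*j+1)) * Real.cos θ ^ (2*j+1) := by
        rw [← pow_add]; congr 1; omega
      have hts : Real.sin θ = Real.tan θ * Real.cos θ := (Real.tan_mul_cos hc.ne').symm
      have h1 : (Real.tan θ ^ 2)^j = Real.tan θ ^ (2*j) := by rw [← pow_mul]
      have h2 : (Real.tan θ * Real.cos θ)^(2*j+1)
          = Real.tan θ^(2*j) * Real.tan θ * Real.cos θ^(2*j+1) := by
        rw [mul_pow, pow_succ]
      rw [hts, hpow, h1, h2]; ring
    rw [Finset.sum_congr rfl hterm, ← Finset.mul_sum] at hexp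
    have hval : Polynomial.eval (f k) P
        = ∑ j ∈ range m, (-1:ℝ)^j * ((2*m).choose (2*j+1)) * (Real.tan θ ^ 2)^j := by
      rw [hP]
      simp [eval_finset_sum, hf, hθ]
    have hne : Real.cos θ ^ (2*m) * Real.tan θ ≠ 0 := by positivity
    have h0 := (mul_eq_zero.mp hexp.symm).resolve_left hne
    rw [IsRoot, hval, h0]
  -- injectivity
  have hinj : Set.InjOn f (Finset.Icc 1 (m-1)) := by
    intro a ha b hb hab
    have hta := htpos a ha
    have htb := htpos b hb
    have h1 := hθmem a ha
    have h2 := hθmem b hb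
    have htan : Real.tan (a * π / (2 * m)) = Real.tan (b * π / (2 * m)) := by
      have hfab : f a = f b := hab
      rw [hf] at hfab
      nlinarith [hfab]
    have hθeq : (a:ℝ) * π / (2 * m) = (b:ℝ) * π / (2 * m) :=
      Real.strictMonoOn_tan.injOn ⟨by linarith [Real.pi_pos, h1.1], h1.2⟩
        ⟨by linarith [Real.pi_pos, h2.1], h2.2⟩ htan
    field_simp at hθeq
    exact_mod_cast hθeq
  set S : Finset ℝ := (Finset.Icc 1 (m-1)).image f with hS
  have hScard : S.card = m - 1 := by
    rw [hS, Finset.card_image_of_injOn hinj, Nat.card_Icc]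
    omega
  have hlc : P.coeff (m-1) = (-1:ℝ)^(m-1) * (2*m) := by
    rw [hcoeff, if_pos (by omega), show 2*(m-1)+1 = 2*m - 1 by omega,
      show (2*m).choose (2*m-1) = 2*m by
        rw [show 2*m-1 = 2*m - 1 from rfl, Nat.choose_symm (by omega), Nat.choose_one_right]]
    push_cast; ring
  have hlcne : P.coeff (m-1) ≠ 0 := by
    rw [hlc]
    have : (0:ℝ) < 2*m := by positivity
    positivity
  have hdeg : P.natDegree = m - 1 := by
    refine le_antisymm (natDegree_le_iff_coeff_eq_zero.mpr fun N hN => ?_)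
      (le_natDegree_of_ne_zero hlcne)
    rw [hcoeff, if_neg (by omega)]
  have hP0 : P ≠ 0 := fun h => hlcne (by rw [h]; simp)
  have hSle : S.val ≤ P.roots := by
    rw [Finset.val_le_iff_val_subset]
    intro a ha
    rw [Finset.mem_val, hS, Finset.mem_image] at ha
    obtain ⟨k, hk, rfl⟩ := ha
    exact (Polynomial.mem_roots hP0).mpr (hroot k hk)
  have hrcard : Multiset.card P.roots = m - 1 := by
    refine le_antisymm ((P.card_roots').trans_eq hdeg) ?_
    calc m - 1 = Multiset.card S.val := by rw [← Finset.card_def, hScard]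
    _ ≤ Multiset.card P.roots := Multiset.card_le_card hSle
  have hsplits : P.Splits := splits_iff_card_roots.mpr (by rw [hrcard, hdeg])
  have hroots_eq : P.roots = S.val :=
    (Multiset.eq_of_le_of_card_le hSle (by rw [hrcard, ← Finset.card_def, hScard])).symm
  have hfact := hsplits.eq_prod_roots
  -- take coefficient m-2
  have hc2 := congrArg (fun q => Polynomial.coeff q (m-2)) hfact
  simp only [coeff_C_mul, hroots_eq] at hc2
  rw [Multiset.prod_X_sub_C_coeff S.val (by rw [← Finset.card_def, hScard]; omega)] at hc2
  have hcard1 : Multiset.card S.val - (m-2) = 1 := by rw [← Finset.card_def, hScard]; omega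
  rw [hcard1, esymm_one', pow_one] at hc2
  have hsum : S.val.sum = ∑ k ∈ Finset.Icc 1 (m-1), f k := by
    rw [show S.val.sum = ∑ x ∈ S, x from (Finset.sum_val S ▸ rfl), hS,
      Finset.sum_image (fun a ha b hb => hinj ha hb)]
  rw [hsum] at hc2
  have hlcoeff : P.leadingCoeff = (-1:ℝ)^(m-1) * (2*m) := by
    rw [Polynomial.leadingCoeff, hdeg, hlc]
  have hcm2 : P.coeff (m-2) = (-1:ℝ)^m * ((2*m).choose 3) := by
    rw [hcoeff, if_pos (by omega), show 2*(m-2)+1 = 2*m - 3 by omega,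
      Nat.choose_symm (by omega : 3 ≤ 2*m)]
    rw [show (-1:ℝ)^(m-2) = (-1)^m by
      rw [show m = (m-2)+2 by omega]; rw [pow_add]; norm_num]
  rw [hcm2, hlcoeff] at hc2
  have hchoose : ((2*m).choose 3 : ℝ) = (2*(m:ℝ)) * (2*m-1) * (2*m-2) / 6 := by
    have h6 := six_mul_choose_three (2*m)
    have : ((6 * (2*m).choose 3 : ℕ) : ℝ) = ((2*m) * (2*m-1) * (2*m-2) : ℕ) := by rw [h6]
    push_cast [Nat.cast_sub (by omega : 1 ≤ 2*m), Nat.cast_sub (by omega : 2 ≤ 2*m)] at this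
    linarith
  have hs : (-1:ℝ)^m = -(-1)^(m-1) := by
    rw [show m = (m-1)+1 by omega, pow_succ]
    simp
  rw [hs, hchoose] at hc2
  have hne1 : ((-1:ℝ)^(m-1)) ≠ 0 := pow_ne_zero _ (by norm_num)
  have hc3 : (-1:ℝ)^(m-1) * ((2*(m:ℝ)) * ((2*(m:ℝ)-1) * (((m:ℝ)-1))/3))
      = (-1:ℝ)^(m-1) * ((2*(m:ℝ)) * (∑ k ∈ Finset.Icc 1 (m-1), f k)) := by
    linear_combination -hc2
  have hc4 := mul_left_cancel₀ hne1 hc3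
  have h2m : (2*(m:ℝ)) ≠ 0 := by positivity
  have hc5 := mul_left_cancel₀ h2m hc4
  rw [← hc5]

theorem gardner_fisher_v1 (m : ℕ) (hm : 0 < m) :
    (π / (2 * m)) ^ 2 * ∑ k ∈ Finset.Icc 1 (m - 1),
      (1 / Real.cos (k * π / (2 * m))) ^ 2 =
    (π ^ 2 / 6) * (1 - 1 / (m : ℝ) ^ 2) := by
  by_cases h1 : m = 1
  · subst h1; simp
  · have hm2 : 2 ≤ m := by omega
    have hm0 : (0:ℝ) < m := by positivity
    have hsec : ∀ k ∈ Finset.Icc 1 (m-1),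
        (1 / Real.cos (k * π / (2 * m)))^2 = 1 + Real.tan (k * π / (2 * m))^2 := by
      intro k hk
      rw [Finset.mem_Icc] at hk
      have hk1 : (1:ℝ) ≤ k := by exact_mod_cast hk.1
      have hkm : (k:ℝ) < m := by exact_mod_cast (by omega : k < m)
      have hlt : (k:ℝ) * π / (2 * m) < π / 2 := by
        rw [div_lt_iff₀ (by positivity)]
        calc (k:ℝ) * π < m * π := by nlinarith [Real.pi_pos]
        _ = π / 2 * (2 * m) := by ring
      have hgt : (0:ℝ) < k * π / (2 * m) := by positivity
      have hc : 0 < Real.cos (k * π / (2 * m)) :=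
        Real.cos_pos_of_mem_Ioo ⟨by linarith [Real.pi_pos], hlt⟩
      have := Real.inv_one_add_tan_sq hc.ne'
      rw [one_div, inv_pow, ← this, inv_inv]
    rw [Finset.sum_congr rfl hsec, Finset.sum_add_distrib, Finset.sum_const,
      tan_sq_sum m hm2, Nat.card_Icc]
    rw [show m - 1 + 1 - 1 = m - 1 by omega, nsmul_eq_mul, Nat.cast_sub (by omega : 1 ≤ m)]
    have hmne : (m:ℝ) ≠ 0 := hm0.ne'
    field_simp
    ring
end

section
/- For every positive integer m, (π/(2m))⁴ · Σ_{k=1}^{m-1} cos⁻⁴(kπ/(2m)) = (π⁴/90)·(1 + 5/(2m²) − 7/(2m⁴)). -/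
open Real Finset Polynomial


lemma coeff_X_mul' (p : Polynomial ℝ) (k : ℕ) :
    (X * p).coeff k = if k = 0 then 0 else p.coeff (k-1) := by
  cases k with
  | zero => simp [Polynomial.mul_coeff_zero]
  | succ n => simp [Polynomial.coeff_X_mul]

lemma coeff_X2_mul (p : Polynomial ℝ) (k : ℕ) :
    (X^2 * p).coeff k = if k < 2 then 0 else p.coeff (k-2) := by
  match k with
  | 0 => simp [Polynomial.mul_coeff_zero]
  | 1 => norm_num [Polynomial.coeff_mul, Finset.Nat.antidiagonal_succ, Polynomial.coeff_X_pow]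
  | (n+2) => rw [show n + 2 = n + 2 from rfl, Polynomial.coeff_X_pow_mul p 2 n]; simp

noncomputable def GH : ℕ → Polynomial ℝ × Polynomial ℝ
  | 0 => (0, 1)
  | m+1 => ((C 2 * X - C 1) * (GH m).1 + C 2 * (GH m).2,
            (C 2 * X - C 1) * (GH m).2 - (C 2 * X - C 2 * X^2) * (GH m).1)

lemma GH_coeffs (m : ℕ) :
    (GH m).1.coeff 0 = -(-1:ℝ)^m * (2*m) ∧
    (GH m).1.coeff 1 = (-1:ℝ)^m * (4*m*((m:ℝ)^2-1)/3) ∧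
    (GH m).1.coeff 2 = -(-1:ℝ)^m * (4*m*((m:ℝ)^2-1)*((m:ℝ)^2-4)/15) ∧
    (GH m).2.coeff 0 = (-1:ℝ)^m ∧
    (GH m).2.coeff 1 = -(-1:ℝ)^m * (2*(m:ℝ)^2) ∧
    (GH m).2.coeff 2 = (-1:ℝ)^m * (2*(m:ℝ)^2*((m:ℝ)^2-1)/3) := by
  induction m with
  | zero => norm_num [GH, Polynomial.coeff_one]
  | succ n ih =>
    obtain ⟨h1, h2, h3, h4, h5, h6⟩ := ih
    have e1 : (C 2 * X - C 1) * (GH n).1 = C 2 * (X * (GH n).1) - C 1 * (GH n).1 := by ring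
    have e2 : (C 2 * X - C 1) * (GH n).2 = C 2 * (X * (GH n).2) - C 1 * (GH n).2 := by ring
    have e3 : (C 2 * X - C 2 * X^2) * (GH n).1
        = C 2 * (X * (GH n).1) - C 2 * (X^2 * (GH n).1) := by ring
    simp only [GH, Polynomial.coeff_add, Polynomial.coeff_sub, e1, e2, e3,
      Polynomial.coeff_C_mul, coeff_X_mul', coeff_X2_mul, h1, h2, h3, h4, h5, h6]
    norm_num
    push_cast
    and_intros <;> first | trivial | ring

lemma GH_deg (n : ℕ) :
    (GH (n+1)).1.natDegree ≤ n ∧ (GH (n+1)).1.coeff n = 2^(2*n+1) ∧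
    (GH (n+1)).2.natDegree ≤ n+1 ∧ (GH (n+1)).2.coeff (n+1) = 2^(2*n+1) := by
  induction n with
  | zero =>
    have hG : (GH 1).1 = C 2 := by simp [GH]
    have hH : (GH 1).2 = C 2 * X - C 1 := by simp [GH]
    refine ⟨by simp [hG], by simp [hG], ?_, by simp [hH, Polynomial.coeff_one]⟩
    rw [hH]
    refine le_trans (Polynomial.natDegree_sub_le _ _) (max_le ?_ (by simp))
    exact le_trans (Polynomial.natDegree_mul_le) (by simp)
  | succ n ih =>
    obtain ⟨dG, cG, dH, cH⟩ := ih
    have hlin : (C 2 * X - C 1 : Polynomial ℝ).natDegree ≤ 1 := by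
      refine le_trans (Polynomial.natDegree_sub_le _ _) (max_le ?_ (by simp))
      exact le_trans (Polynomial.natDegree_mul_le) (by simp)
    have hquad : (C 2 * X - C 2 * X^2 : Polynomial ℝ).natDegree ≤ 2 := by
      refine le_trans (Polynomial.natDegree_sub_le _ _) ?_
      simp only [max_le_iff]
      constructor
      · exact le_trans (Polynomial.natDegree_mul_le) (by simp)
      · exact le_trans (Polynomial.natDegree_mul_le) (by simp [Polynomial.natDegree_X_pow])
    have e1 : (C 2 * X - C 1) * (GH (n+1)).1 = C 2 * (X * (GH (n+1)).1) - C 1 * (GH (n+1)).1 := by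
      ring
    have e2 : (C 2 * X - C 1) * (GH (n+1)).2 = C 2 * (X * (GH (n+1)).2) - C 1 * (GH (n+1)).2 := by
      ring
    have e3 : (C 2 * X - C 2 * X^2) * (GH (n+1)).1
        = C 2 * (X * (GH (n+1)).1) - C 2 * (X^2 * (GH (n+1)).1) := by ring
    have zG : (GH (n+1)).1.coeff (n+1) = 0 :=
      Polynomial.coeff_eq_zero_of_natDegree_lt (lt_of_le_of_lt dG (by omega))
    have zH : (GH (n+1)).2.coeff (n+2) = 0 :=
      Polynomial.coeff_eq_zero_of_natDegree_lt (lt_of_le_of_lt dH (by omega))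
    refine ⟨?_, ?_, ?_, ?_⟩
    · show ((C 2 * X - C 1) * (GH (n+1)).1 + C 2 * (GH (n+1)).2).natDegree ≤ n+1
      refine le_trans (Polynomial.natDegree_add_le _ _) ?_
      simp only [max_le_iff]
      exact ⟨le_trans (Polynomial.natDegree_mul_le) (by omega),
        le_trans (Polynomial.natDegree_mul_le) (by simp; omega)⟩
    · show ((C 2 * X - C 1) * (GH (n+1)).1 + C 2 * (GH (n+1)).2).coeff (n+1) = _
      rw [e1]
      simp only [Polynomial.coeff_add, Polynomial.coeff_sub, Polynomial.coeff_C_mul,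
        coeff_X_mul', cG, cH, zG]
      simp only [Nat.add_sub_cancel, cG]
      norm_num
      ring
    · show ((C 2 * X - C 1) * (GH (n+1)).2 - (C 2 * X - C 2 * X^2) * (GH (n+1)).1).natDegree
        ≤ n+2
      refine le_trans (Polynomial.natDegree_sub_le _ _) ?_
      simp only [max_le_iff]
      exact ⟨le_trans (Polynomial.natDegree_mul_le) (by omega),
        le_trans (Polynomial.natDegree_mul_le) (by omega)⟩
    · show ((C 2 * X - C 1) * (GH (n+1)).2 - (C 2 * X - C 2 * X^2) * (GH (n+1)).1).coeff (n+2)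
        = _
      rw [e2, e3]
      simp only [Polynomial.coeff_sub, Polynomial.coeff_C_mul, coeff_X_mul', coeff_X2_mul]
      norm_num [Nat.add_sub_cancel, zG, zH]
      rw [cG, cH]
      split_ifs with hif
      · omega
      · ring

lemma vieta (s : Finset ℕ) (y : ℕ → ℝ) (hy : ∀ i ∈ s, y i ≠ 0) :
    (∏ i ∈ s, (X - C (y i))).coeff 0 = (-1:ℝ)^s.card * ∏ i ∈ s, y i ∧
    (∏ i ∈ s, (X - C (y i))).coeff 1
      = -((-1:ℝ)^s.card * ∏ i ∈ s, y i) * ∑ i ∈ s, (y i)⁻¹ ∧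
    (∏ i ∈ s, (X - C (y i))).coeff 2
      = ((-1:ℝ)^s.card * ∏ i ∈ s, y i) *
        (((∑ i ∈ s, (y i)⁻¹)^2 - ∑ i ∈ s, ((y i)⁻¹)^2)/2) := by
  classical
  induction s using Finset.induction with
  | empty => simp [Polynomial.coeff_one]
  | insert a t hnotmem ih =>
    have hya : y a ≠ 0 := hy a (Finset.mem_insert_self a t)
    obtain ⟨c0, c1, c2⟩ := ih (fun i hi => hy i (Finset.mem_insert_of_mem hi))
    have hsplit : (X - C (y a)) * (∏ i ∈ t, (X - C (y i)))
        = X * (∏ i ∈ t, (X - C (y i))) - C (y a) * (∏ i ∈ t, (X - C (y i))) := by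
      ring
    have hz : y a * (y a)⁻¹ = 1 := mul_inv_cancel₀ hya
    rw [Finset.card_insert_of_notMem hnotmem, Finset.prod_insert hnotmem,
      Finset.prod_insert hnotmem, Finset.sum_insert hnotmem, Finset.sum_insert hnotmem]
    refine ⟨?_, ?_, ?_⟩
    · rw [hsplit]
      simp only [Polynomial.coeff_sub, Polynomial.coeff_C_mul, coeff_X_mul', c0]
      norm_num
      ring
    · rw [hsplit]
      simp only [Polynomial.coeff_sub, Polynomial.coeff_C_mul, coeff_X_mul', c0, c1]
      norm_num
      linear_combination (-(-1:ℝ)^t.card * ∏ i ∈ t, y i) * hz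
    · rw [hsplit]
      simp only [Polynomial.coeff_sub, Polynomial.coeff_C_mul, coeff_X_mul', c1, c2]
      norm_num
      linear_combination ((-1:ℝ)^t.card * (∏ i ∈ t, y i) * ∑ i ∈ t, (y i)⁻¹) * hz

lemma GH_eval (m : ℕ) (θ : ℝ) :
    Real.sin (2*m*θ) = Real.sin θ * Real.cos θ * ((GH m).1.eval (Real.cos θ^2)) ∧
    Real.cos (2*m*θ) = (GH m).2.eval (Real.cos θ^2) := by
  induction m with
  | zero => simp [GH]
  | succ n ih =>
    obtain ⟨ihs, ihc⟩ := ih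
    have h2 : (2*((n:ℝ)+1))*θ = 2*n*θ + 2*θ := by ring
    have hs : Real.sin θ ^ 2 = 1 - Real.cos θ ^ 2 := Real.sin_sq θ
    push_cast
    rw [h2, Real.sin_add, Real.cos_add, Real.sin_two_mul, Real.cos_two_mul, ihs, ihc]
    simp only [GH, eval_add, eval_sub, eval_mul, eval_C, eval_X, eval_pow]
    constructor
    · ring
    · linear_combination (-2 * cos θ ^ 2 * eval (cos θ ^ 2) (GH n).1) * hs

theorem gardner_fisher_v2 (m : ℕ) (hm : 0 < m) :
    (π / (2 * m)) ^ 4 * ∑ k ∈ Finset.Icc 1 (m - 1),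
      (1 / Real.cos (k * π / (2 * m))) ^ 4 =
    (π ^ 4 / 90) * (1 + 5 / (2 * (m : ℝ) ^ 2) - 7 / (2 * (m : ℝ) ^ 4)) := by
  obtain ⟨n, rfl⟩ : ∃ n, m = n + 1 := ⟨m - 1, by omega⟩
  set M : ℝ := ((n : ℝ) + 1) with hM
  have hMcast : ((n + 1 : ℕ) : ℝ) = M := by push_cast [hM]; ring
  have hMpos : 0 < M := by positivity
  set x : ℕ → ℝ := fun k => Real.cos (k * π / (2 * M)) ^ 2 with hx
  set s : Finset ℕ := Finset.Icc 1 n with hs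
  -- basic facts about the angles
  have hθ : ∀ k ∈ s, 0 < (k:ℝ) * π / (2 * M) ∧ (k:ℝ) * π / (2 * M) < π / 2 := by
    intro k hk
    rw [hs, Finset.mem_Icc] at hk
    have hk1 : (1:ℝ) ≤ (k:ℝ) := by exact_mod_cast hk.1
    have hk2 : (k:ℝ) ≤ (n:ℝ) := by exact_mod_cast hk.2
    constructor
    · positivity
    · rw [div_lt_div_iff₀ (by positivity) (by norm_num)]
      nlinarith [pi_pos]
  have hcos : ∀ k ∈ s, 0 < Real.cos ((k:ℝ) * π / (2 * M)) := by
    intro k hk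
    obtain ⟨h1, h2⟩ := hθ k hk
    exact Real.cos_pos_of_mem_Ioo ⟨by linarith [pi_pos], h2⟩
  have hxne : ∀ k ∈ s, x k ≠ 0 := by
    intro k hk
    have := hcos k hk
    simp only [hx]
    positivity
  -- x k is a root of (GH (n+1)).1
  have hroot : ∀ k ∈ s, ((GH (n+1)).1).eval (x k) = 0 := by
    intro k hk
    obtain ⟨h1, h2⟩ := hθ k hk
    have hc := hcos k hk
    have hsin : 0 < Real.sin ((k:ℝ) * π / (2 * M)) :=
      Real.sin_pos_of_pos_of_lt_pi h1 (by linarith [pi_pos])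
    have hev := (GH_eval (n+1) ((k:ℝ) * π / (2 * M))).1
    have harg : 2 * ((n+1 : ℕ) : ℝ) * ((k:ℝ) * π / (2 * M)) = (k:ℝ) * π := by
      rw [hMcast]; field_simp
    rw [harg, Real.sin_nat_mul_pi] at hev
    have hne : Real.sin ((k:ℝ) * π / (2 * M)) * Real.cos ((k:ℝ) * π / (2 * M)) ≠ 0 := by
      positivity
    have := hev.symm
    rw [mul_assoc] at this
    rcases mul_eq_zero.mp this with h | h
    · exact absurd h hsin.ne'
    · rcases mul_eq_zero.mp h with h' | h'
      · exact absurd h' hc.ne'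
      · exact h'
  -- injectivity
  have hinj : Set.InjOn x s := by
    intro j hj k hk hjk
    have hcj := hcos j hj
    have hck := hcos k hk
    have hcc : Real.cos ((j:ℝ) * π / (2 * M)) = Real.cos ((k:ℝ) * π / (2 * M)) := by
      simp only [hx] at hjk
      nlinarith [hjk]
    have hθj := hθ j hj
    have hθk := hθ k hk
    have : (j:ℝ) * π / (2 * M) = (k:ℝ) * π / (2 * M) := by
      apply Real.injOn_cos ⟨le_of_lt hθj.1, by linarith [hθj.2, pi_pos]⟩
        ⟨le_of_lt hθk.1, by linarith [hθk.2, pi_pos]⟩ hcc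
    have : (j:ℝ) = (k:ℝ) := by
      field_simp at this
      exact_mod_cast this
    exact_mod_cast this
  -- factorization
  set P : Polynomial ℝ := ∏ k ∈ s, (X - C (x k)) with hP
  set a : ℝ := 2 ^ (2 * n + 1) with ha
  have hmonic : P.Monic := Polynomial.monic_prod_of_monic _ _ (fun k _ => monic_X_sub_C _)
  have hcard : s.card = n := by rw [hs, Nat.card_Icc]; omega
  have hPdeg : P.natDegree = n := by
    rw [hP, Polynomial.natDegree_prod_of_monic _ _ (fun k _ => monic_X_sub_C _)]
    simp [Polynomial.natDegree_X_sub_C, hcard]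
  obtain ⟨dG, cG, _, _⟩ := GH_deg n
  have hfact : (GH (n+1)).1 = C a * P := by
    have hDdeg : ((GH (n+1)).1 - C a * P).natDegree ≤ n := by
      refine le_trans (Polynomial.natDegree_sub_le _ _) (max_le dG ?_)
      exact le_trans (Polynomial.natDegree_C_mul_le _ _) (le_of_eq hPdeg)
    have hPcoeffn : P.coeff n = 1 := by
      have := hmonic.coeff_natDegree
      rwa [hPdeg] at this
    have hDcoeff : ((GH (n+1)).1 - C a * P).coeff n = 0 := by
      rw [Polynomial.coeff_sub, Polynomial.coeff_C_mul, cG, hPcoeffn, ha]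
      ring
    by_cases hD : (GH (n+1)).1 - C a * P = 0
    · exact sub_eq_zero.mp hD
    · exfalso
      apply hD
      apply Polynomial.eq_zero_of_natDegree_lt_card_of_eval_eq_zero' _ (s.image x)
      · intro i hi
        obtain ⟨k, hk, rfl⟩ := Finset.mem_image.mp hi
        rw [Polynomial.eval_sub, hroot k hk, Polynomial.eval_mul, Polynomial.eval_C, hP,
          Polynomial.eval_prod]
        rw [Finset.prod_eq_zero hk (by simp)]
        ring
      · rw [Finset.card_image_of_injOn hinj, hcard]
        rcases lt_or_eq_of_le hDdeg with h | h
        · exact h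
        · exfalso
          have hlc := Polynomial.leadingCoeff_ne_zero.mpr hD
          rw [Polynomial.leadingCoeff, h] at hlc
          exact hlc hDcoeff
  -- extract coefficient identities
  obtain ⟨p0, p1, p2⟩ := vieta s x hxne
  obtain ⟨g0, g1, g2, -, -, -⟩ := GH_coeffs (n+1)
  set ε : ℝ := (-1:ℝ)^n with hε
  have hεε : ε * ε = 1 := by
    rw [hε, ← pow_add]
    exact Even.neg_one_pow ⟨n, rfl⟩
  set Pr : ℝ := ∏ i ∈ s, x i with hPr
  set S1 : ℝ := ∑ i ∈ s, (x i)⁻¹ with hS1def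
  set S2 : ℝ := ∑ i ∈ s, ((x i)⁻¹)^2 with hS2def
  rw [hfact, Polynomial.coeff_C_mul, p0, hcard, hMcast, pow_succ, ← hε] at g0
  rw [hfact, Polynomial.coeff_C_mul, p1, hcard, hMcast, pow_succ, ← hε] at g1
  rw [hfact, Polynomial.coeff_C_mul, p2, hcard, hMcast, pow_succ, ← hε] at g2
  have hu : a * Pr = 2 * M := by
    linear_combination ε * g0 - (a * Pr - 2 * M) * hεε
  have hg1 : 2 * M * S1 = 4 * M * (M^2 - 1) / 3 := by
    linear_combination (-ε) * g1 - (a * Pr * S1 - 4 * M * (M^2-1)/3) * hεε - S1 * hu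
  have hg2 : 2 * M * ((S1^2 - S2)/2) = 4 * M * (M^2-1) * (M^2-4) / 15 := by
    linear_combination ε * g2 - (a * Pr * ((S1^2-S2)/2) - 4*M*(M^2-1)*(M^2-4)/15) * hεε
      - ((S1^2-S2)/2) * hu
  have h2M : (2 * M) ≠ 0 := by positivity
  have hS1val : S1 = 2 * (M^2 - 1) / 3 :=
    mul_left_cancel₀ h2M (hg1.trans (by ring))
  have hMS2 : M * S2 = M * (4*(M^2-1)^2/9 - 4*(M^2-1)*(M^2-4)/15) := by
    linear_combination (-1) * hg2 + M * (S1 + 2*(M^2-1)/3) * hS1val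
  have hS2val : S2 = 4*(M^2-1)^2/9 - 4*(M^2-1)*(M^2-4)/15 :=
    mul_left_cancel₀ hMpos.ne' hMS2
  have hgoalsum : ∑ k ∈ Finset.Icc 1 (n+1-1),
      (1 / Real.cos ((k:ℝ) * π / (2 * M)))^4 = S2 := by
    rw [show n+1-1 = n from rfl, hS2def, ← hs]
    apply Finset.sum_congr rfl
    intro k _
    simp only [hx, one_div, ← inv_pow, ← pow_mul]
  rw [hMcast, hgoalsum, hS2val]
  have hπ := Real.pi_ne_zero
  field_simp
  ring
end

section
/- For every positive integer v, lim_{m→∞} (π/(2m))^{2v} Σ_{k=1}^{m-1} cos^{−2v}(kπ/(2m)) = ζ(2v), where ζ is the Riemann zeta function. -/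
open Real Finset Filter

lemma tendsto_div_sin : Tendsto (fun x : ℝ => x / Real.sin x) (nhdsWithin 0 {(0:ℝ)}ᶜ) (nhds 1) := by
  have h : HasDerivAt Real.sin 1 0 := by simpa using Real.hasDerivAt_sin 0
  have h2 := hasDerivAt_iff_tendsto_slope.mp h
  have h3 : Tendsto (fun x : ℝ => Real.sin x / x) (nhdsWithin 0 {(0:ℝ)}ᶜ) (nhds 1) := by
    refine h2.congr fun x => ?_
    simp [slope_def_field]
  have := h3.inv₀ one_ne_zero
  simpa [inv_div] using this

-- the summand after reindexing
noncomputable def gfF (v m j : ℕ) : ℝ :=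
  if j ∈ Finset.Icc 1 (m - 1) then (π / (2 * m) * (1 / Real.sin (j * π / (2 * m)))) ^ (2 * v) else 0

lemma gfF_eq_sum (v m : ℕ) :
    (π / (2 * m)) ^ (2 * v) * ∑ k ∈ Finset.Icc 1 (m - 1),
        (1 / Real.cos (k * π / (2 * m))) ^ (2 * v) = ∑' j : ℕ, gfF v m j := by
  rw [tsum_eq_sum (s := Finset.Icc 1 (m-1)) (by intro j hj; simp [gfF, hj])]
  rw [Finset.mul_sum]
  refine Finset.sum_nbij' (i := fun k => m - k) (j := fun k => m - k) ?_ ?_ ?_ ?_ ?_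
  · intro k hk; simp only [Finset.mem_Icc] at *; omega
  · intro k hk; simp only [Finset.mem_Icc] at *; omega
  · intro k hk; simp only [Finset.mem_Icc] at *; omega
  · intro k hk; simp only [Finset.mem_Icc] at *; omega
  · intro k hk
    simp only [Finset.mem_Icc] at hk
    have hm : 2 ≤ m := by omega
    have hmem : m - k ∈ Finset.Icc 1 (m-1) := by simp only [Finset.mem_Icc]; omega
    rw [gfF, if_pos hmem, ← mul_pow]
    congr 2
    have hcast : ((m - k : ℕ) : ℝ) = (m : ℝ) - k := by
      rw [Nat.cast_sub (by omega)]
    rw [hcast]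
    have hm0 : (m : ℝ) ≠ 0 := by positivity
    have : ((m : ℝ) - k) * π / (2 * m) = π / 2 - k * π / (2 * m) := by
      field_simp
    rw [this, Real.sin_pi_div_two_sub]

lemma gfF_bound (v m j : ℕ) : ‖gfF v m j‖ ≤ (π / 2 * (1 / (j:ℝ))) ^ (2 * v) := by
  unfold gfF
  split_ifs with h
  · simp only [Finset.mem_Icc] at h
    obtain ⟨hj1, hj2⟩ := h
    have hm : 2 ≤ m := by omega
    have hm0 : (0:ℝ) < m := by positivity
    have hj0 : (0:ℝ) < j := by exact_mod_cast hj1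
    set x : ℝ := j * π / (2 * m) with hx
    have hx0 : 0 < x := by positivity
    have hxle : x ≤ π / 2 := by
      rw [hx, div_le_div_iff₀ (by positivity) two_pos]
      have hjm : (j : ℝ) ≤ m := by exact_mod_cast (by omega : j ≤ m)
      nlinarith [pi_pos]
    have hsin : (j : ℝ) / m ≤ Real.sin x := by
      have := Real.mul_le_sin hx0.le hxle
      have heq : 2 / π * x = (j : ℝ) / m := by
        rw [hx]; field_simp
      linarith [heq ▸ this]
    have hsin0 : 0 < Real.sin x := lt_of_lt_of_le (by positivity) hsin
    have hbase : 0 ≤ π / (2 * m) * (1 / Real.sin x) := by positivity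
    have hkey : π / (2 * m) * (1 / Real.sin x) ≤ π / 2 * (1 / (j:ℝ)) := by
      have h1 : 1 / Real.sin x ≤ (m : ℝ) / j :=
        (one_div_le_one_div_of_le (by positivity) hsin).trans_eq (one_div_div _ _)
      calc π / (2 * m) * (1 / Real.sin x) ≤ π / (2 * m) * ((m:ℝ) / j) := by
            apply mul_le_mul_of_nonneg_left h1 (by positivity)
        _ = π / 2 * (1 / (j:ℝ)) := by field_simp
    rw [Real.norm_eq_abs, abs_of_nonneg (pow_nonneg hbase _)]
    exact pow_le_pow_left₀ hbase hkey _
  · simp only [norm_zero]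
    positivity

lemma gfF_tendsto (v j : ℕ) (hv : 0 < v) :
    Tendsto (fun m : ℕ => gfF v m j) atTop (nhds ((1 / (j:ℝ)) ^ (2 * v))) := by
  rcases Nat.eq_zero_or_pos j with rfl | hj
  · have : ∀ m, gfF v 0 m = gfF v 0 m := fun _ => rfl
    have hz : ∀ m : ℕ, gfF v m 0 = 0 := by intro m; simp [gfF]
    simp only [hz, Nat.cast_zero, div_zero]
    rw [zero_pow (by omega : 2 * v ≠ 0)]
    exact tendsto_const_nhds
  · have hj0 : (0:ℝ) < j := by exact_mod_cast hj
    -- x m := j * π / (2 * m) tends to 0 within ≠ 0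
    have hx : Tendsto (fun m : ℕ => (j:ℝ) * π / (2 * m)) atTop (nhdsWithin 0 {(0:ℝ)}ᶜ) := by
      rw [tendsto_nhdsWithin_iff]
      constructor
      · have h1 : Tendsto (fun m : ℕ => ((m:ℝ))⁻¹) atTop (nhds 0) :=
          tendsto_inv_atTop_zero.comp tendsto_natCast_atTop_atTop
        have := h1.const_mul ((j:ℝ) * π / 2)
        simpa [mul_comm, mul_assoc, div_eq_mul_inv, mul_zero] using this.congr (by
          intro m
          by_cases hm : m = 0
          · simp [hm]
          · have : (m:ℝ) ≠ 0 := by exact_mod_cast hm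
            field_simp)
      · filter_upwards [eventually_ge_atTop 1] with m hm
        have : (0:ℝ) < m := by exact_mod_cast hm
        simp only [Set.mem_compl_iff, Set.mem_singleton_iff]
        positivity
    have hratio : Tendsto (fun m : ℕ => ((j:ℝ) * π / (2 * m)) / Real.sin ((j:ℝ) * π / (2 * m)))
        atTop (nhds 1) := tendsto_div_sin.comp hx
    have hmain : Tendsto (fun m : ℕ => (1 / (j:ℝ) * (((j:ℝ) * π / (2 * m)) / Real.sin ((j:ℝ) * π / (2 * m)))) ^ (2 * v))
        atTop (nhds ((1 / (j:ℝ)) ^ (2 * v))) := by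
      have := (hratio.const_mul (1 / (j:ℝ))).pow (2 * v)
      simpa using this
    refine hmain.congr' ?_
    filter_upwards [eventually_ge_atTop (j + 1)] with m hm
    have hmem : j ∈ Finset.Icc 1 (m - 1) := by simp only [Finset.mem_Icc]; omega
    rw [gfF, if_pos hmem]
    congr 1
    have hjne : (j:ℝ) ≠ 0 := hj0.ne'
    have hmne : (m:ℝ) ≠ 0 := by
      have : (0:ℕ) < m := by omega
      exact_mod_cast this.ne'
    rw [mul_div_assoc']
    have h4 : (1:ℝ) / j * ((j:ℝ) * π / (2 * m)) = π / (2 * m) := by field_simp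
    rw [h4, div_eq_mul_one_div]

theorem gardner_fisher_limit (v : ℕ) (hv : 0 < v) :
    Filter.Tendsto
      (fun m : ℕ => (((π / (2 * m)) ^ (2 * v) * ∑ k ∈ Finset.Icc 1 (m - 1),
        (1 / Real.cos (k * π / (2 * m))) ^ (2 * v) : ℝ) : ℂ))
      Filter.atTop (nhds (riemannZeta (2 * v))) := by
  have hlt : 1 < 2 * v := by omega
  -- summability of the bound and of the limit
  have hsum0 : Summable (fun j : ℕ => 1 / (j:ℝ) ^ (2 * v)) :=
    Real.summable_one_div_nat_pow.mpr hlt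
  have hsum : Summable (fun j : ℕ => (π / 2 * (1 / (j:ℝ))) ^ (2 * v)) := by
    have := hsum0.mul_left ((π / 2) ^ (2 * v))
    refine this.congr fun j => ?_
    rw [mul_pow, one_div_pow, mul_one_div]
  -- the real-valued limit via dominated convergence
  have hreal : Tendsto (fun m : ℕ => ∑' j : ℕ, gfF v m j) atTop
      (nhds (∑' j : ℕ, (1 / (j:ℝ)) ^ (2 * v))) := by
    exact tendsto_tsum_of_dominated_convergence hsum (fun j => gfF_tendsto v j hv)
      (Filter.Eventually.of_forall fun m => fun j => gfF_bound v m j)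
  have hreal' : Tendsto (fun m : ℕ => (π / (2 * m)) ^ (2 * v) * ∑ k ∈ Finset.Icc 1 (m - 1),
      (1 / Real.cos (k * π / (2 * m))) ^ (2 * v)) atTop
      (nhds (∑' j : ℕ, (1 / (j:ℝ)) ^ (2 * v))) := by
    refine hreal.congr fun m => (gfF_eq_sum v m).symm ▸ rfl
  -- pass to ℂ
  have hzeta : riemannZeta (2 * (v:ℂ)) = ((∑' j : ℕ, (1 / (j:ℝ)) ^ (2 * v) : ℝ) : ℂ) := by
    have hc : ((2 * v : ℕ) : ℂ) = 2 * (v : ℂ) := by push_cast; ring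
    rw [← hc, zeta_nat_eq_tsum_of_gt_one hlt, Complex.ofReal_tsum]
    refine tsum_congr fun n => ?_
    push_cast
    rw [div_pow, one_pow]
  rw [hzeta]
  exact (Complex.continuous_ofReal.tendsto _).comp hreal'
end

section
/- For all real x with 0 < x < 1, π² csc²(πx) = −∫_0^1 (ln u)/(1−u) · (u^{x−1} + u^{−x}) du. -/
section helpers
open Real MeasureTheory Set intervalIntegral Complex

lemma aux_ii {b : ℝ} (hb : -1 < b) :
    IntegrableOn (fun u => u ^ b * (-Real.log u)) (Set.Ioc (0:ℝ) 1) := by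
  have hq : (0:ℝ) < (b + 1) / 2 := by linarith
  set q : ℝ := (b + 1) / 2 with hqdef
  have hp : (-1:ℝ) < b - q := by rw [hqdef]; linarith
  have hg : IntegrableOn (fun u : ℝ => u ^ (b - q) / q) (Set.Ioc (0:ℝ) 1) := by
    have := (intervalIntegral.intervalIntegrable_rpow' (a := 0) (b := 1) hp).div_const q
    rwa [intervalIntegrable_iff_integrableOn_Ioc_of_le zero_le_one] at this
  refine hg.mono' ?_ ?_
  · refine (ContinuousOn.aestronglyMeasurable ?_ measurableSet_Ioc)
    refine ((continuousOn_id.rpow_const fun u hu => Or.inl (ne_of_gt hu.1)).mul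
      (Real.continuousOn_log.mono ?_).neg)
    intro u hu; exact ne_of_gt hu.1
  · rw [ae_restrict_iff' measurableSet_Ioc]
    filter_upwards with u hu
    obtain ⟨hu0, hu1⟩ := hu
    have hlog : 0 ≤ -Real.log u := by
      simpa using Real.log_nonpos hu0.le hu1
    have hpow : (0:ℝ) ≤ u ^ b := Real.rpow_nonneg hu0.le _
    rw [Real.norm_of_nonneg (mul_nonneg hpow hlog)]
    have key : -Real.log u ≤ u ^ (-q) / q := by
      have h1 : Real.log ((u⁻¹) ^ q) = q * Real.log u⁻¹ := Real.log_rpow (by positivity) q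
      have h2 : Real.log ((u⁻¹) ^ q) ≤ (u⁻¹) ^ q - 1 :=
        Real.log_le_sub_one_of_pos (by positivity)
      have h3 : (u⁻¹ : ℝ) ^ q = u ^ (-q) := by
        rw [Real.inv_rpow hu0.le, Real.rpow_neg hu0.le]
      rw [Real.log_inv] at h1
      have h4 : q * (-Real.log u) ≤ u ^ (-q) := by nlinarith
      rw [le_div_iff₀ hq]
      linarith [h4]
    calc u ^ b * (-Real.log u) ≤ u ^ b * (u ^ (-q) / q) := by
          exact mul_le_mul_of_nonneg_left key hpow
      _ = u ^ (b - q) / q := by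
          rw [mul_div_assoc', ← Real.rpow_add hu0]; ring_nf

lemma aux_eval {b : ℝ} (hb : -1 < b) :
    ∫ u in (0:ℝ)..1, u ^ b * (-Real.log u) = 1 / (b + 1) ^ 2 := by
  have hB : 0 < b + 1 := by linarith
  set G : ℝ → ℝ := fun u => (u ^ (b + 1) * (1 - (b + 1) * Real.log u)) / (b + 1) ^ 2 with hG
  have hcont : ContinuousOn G (Icc (0:ℝ) 1) := by
    refine ContinuousOn.div_const ?_ _
    have h1 : ContinuousOn (fun u : ℝ => u ^ (b + 1)) (Icc 0 1) :=
      (continuousOn_id.rpow_const fun u _ => Or.inr hB.le)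
    have h2 : ContinuousOn (fun u : ℝ => u ^ (b + 1) * Real.log u) (Icc 0 1) := by
      intro u hu
      rcases eq_or_ne u 0 with rfl | hu0
      · rw [← continuousWithinAt_diff_self]
        have hsub : Icc (0:ℝ) 1 \ {0} ⊆ Ioi 0 := by
          rintro v ⟨⟨hv0, hv1⟩, hv⟩
          exact lt_of_le_of_ne hv0 (Ne.symm (by simpa using hv))
        refine ContinuousWithinAt.mono ?_ hsub
        unfold ContinuousWithinAt
        have : Real.log 0 = 0 := Real.log_zero
        have h0 : (fun u : ℝ => u ^ (b + 1) * Real.log u) 0 = 0 := by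
          simp [Real.zero_rpow hB.ne']
        rw [h0]
        have := tendsto_log_mul_rpow_nhdsGT_zero hB
        refine this.congr' ?_ |>.mono_left ?_
        · filter_upwards with v using mul_comm _ _
        · exact le_refl _
      · exact (h1 u hu).mul (Real.continuousAt_log hu0).continuousWithinAt
    have h3 : ContinuousOn (fun u : ℝ => u ^ (b + 1) * (1 - (b + 1) * Real.log u)) (Icc 0 1) := by
      have := h1.sub (h2.const_smul (b + 1))
      refine this.congr fun u hu => ?_
      simp [smul_eq_mul]; ring
    exact h3
  have hderiv : ∀ u ∈ Ioo (0:ℝ) 1, HasDerivAt G (u ^ b * (-Real.log u)) u := by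
    intro u hu
    have hu0 : u ≠ 0 := ne_of_gt hu.1
    have d1 : HasDerivAt (fun v : ℝ => v ^ (b + 1)) ((b + 1) * u ^ b) u := by
      have := Real.hasDerivAt_rpow_const (p := b + 1) (Or.inl hu0)
      simpa using this
    have d2 : HasDerivAt Real.log u⁻¹ u := Real.hasDerivAt_log hu0
    have d3 : HasDerivAt (fun v : ℝ => 1 - (b + 1) * Real.log v) (-((b + 1) * u⁻¹)) u := by
      simpa using ((d2.const_mul (b + 1)).const_sub 1)
    have d4 := (d1.mul d3).div_const ((b + 1) ^ 2)
    convert d4 using 1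
    · rfl
    · rfl
    · rfl
    have hupow : u ^ (b + 1) = u ^ b * u := Real.rpow_add_one hu0 b
    rw [hupow]
    field_simp
    ring
  have := intervalIntegral.integral_eq_sub_of_hasDerivAt_of_le zero_le_one hcont hderiv
    ((intervalIntegrable_iff_integrableOn_Ioc_of_le zero_le_one).mpr (aux_ii hb))
  rw [this, hG]
  simp [Real.zero_rpow hB.ne', Real.log_one]


lemma aux_summable {c : ℝ} (hc : 0 < c) :
    Summable (fun n : ℕ => 1 / ((n : ℝ) + c) ^ 2) := by
  rw [← summable_nat_add_iff 1]
  have h : Summable (fun n : ℕ => 1 / ((n : ℝ) + 1) ^ 2) := by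
    have := (summable_nat_add_iff (f := fun n : ℕ => 1 / (n : ℝ) ^ 2) 1).2
      (Real.summable_one_div_nat_pow.2 one_lt_two)
    simpa using this
  refine h.of_nonneg_of_le (fun n => by positivity) (fun n => ?_)
  push_cast
  rw [div_le_div_iff₀ (by positivity) (by positivity)]
  nlinarith [hc, Nat.cast_nonneg (α := ℝ) n]

lemma aux_parseval (x : ℝ) (hx0 : 0 < x) (hx1 : x < 1) :
    HasSum (fun n : ℤ => 1 / (x - (n : ℝ)) ^ 2) (π ^ 2 * (1 / Real.sin (π * x)) ^ 2) := by
  haveI : Fact (0 < (1:ℝ)) := ⟨one_pos⟩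
  set g : ℝ → ℂ := fun t => Complex.exp (2 * (π : ℂ) * Complex.I * (x : ℂ) * (t : ℂ)) with hg
  set f : AddCircle (1:ℝ) → ℂ := AddCircle.liftIoc 1 0 g with hf
  have hgc : Continuous g := by fun_prop
  have hfm : Measurable f := by
    have : Measurable (AddCircle.equivIoc (1:ℝ) 0) :=
      (AddCircle.measurableEquivIoc 1 0).measurable
    exact (hgc.measurable.comp measurable_subtype_coe).comp this
  have hnorm : ∀ t, ‖f t‖ = 1 := by
    intro t
    show ‖g _‖ = 1
    rw [hg]
    simp [Complex.norm_exp]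
  have hmem : MemLp f 2 AddCircle.haarAddCircle :=
    MemLp.of_bound hfm.aestronglyMeasurable 1 (Filter.Eventually.of_forall fun t => (hnorm t).le)
  set F := hmem.toLp f with hF
  have hFf : ⇑F =ᵐ[AddCircle.haarAddCircle] f := hmem.coeFn_toLp
  have parseval := tsum_sq_fourierCoeff F
  have hRHS : (∫ t : AddCircle 1, ‖F t‖ ^ 2 ∂AddCircle.haarAddCircle) = 1 := by
    have h1 : (∫ t : AddCircle 1, ‖F t‖ ^ 2 ∂AddCircle.haarAddCircle)
        = ∫ t : AddCircle 1, ‖f t‖ ^ 2 ∂AddCircle.haarAddCircle := by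
      refine integral_congr_ae ?_
      filter_upwards [hFf] with t ht
      rw [ht]
    have h2 : ∀ t, ‖f t‖ ^ 2 = (1:ℝ) := fun t => by rw [hnorm t]; norm_num
    rw [h1]
    simp only [h2]
    simp
  have hcoeff : ∀ n : ℤ, fourierCoeff (⇑F) n = fourierCoeff f n := by
    intro n
    unfold fourierCoeff
    refine integral_congr_ae ?_
    filter_upwards [hFf] with t ht
    rw [ht]
  have hxn : ∀ n : ℤ, x - (n : ℝ) ≠ 0 := by
    intro n h
    have h0 : (0:ℝ) < (n:ℝ) := by linarith
    have h1 : ((n:ℝ)) < 1 := by linarith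
    have h0' : (0:ℤ) < n := by exact_mod_cast h0
    have h1' : n < 1 := by exact_mod_cast h1
    omega
  have hcoeff2 : ∀ n : ℤ, fourierCoeff f n =
      (Complex.exp (2 * π * Complex.I * x) - 1) / (2 * π * Complex.I * ((x:ℂ) - n)) := by
    intro n
    rw [hf, fourierCoeff_liftIoc_eq, fourierCoeffOn_eq_integral]
    have hint : ∀ t : ℝ, t ∈ Set.uIcc (0:ℝ) (0 + 1) →
        (fourier (-n) (t : AddCircle (0 + 1 - 0 : ℝ))) • g t
        = Complex.exp ((2 * π * Complex.I * ((x:ℂ) - n)) * t) := by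
      intro t _
      rw [fourier_coe_apply, smul_eq_mul, hg, ← Complex.exp_add]
      congr 1
      push_cast
      ring
    rw [intervalIntegral.integral_congr hint]
    have hc : (2 * (π:ℂ) * Complex.I * ((x:ℂ) - n)) ≠ 0 := by
      refine mul_ne_zero (mul_ne_zero (mul_ne_zero two_ne_zero ?_) Complex.I_ne_zero) ?_
      · exact_mod_cast Complex.ofReal_ne_zero.mpr Real.pi_ne_zero
      · have : ((x - (n:ℝ) : ℝ) : ℂ) ≠ 0 := Complex.ofReal_ne_zero.mpr (hxn n)
        push_cast at this ⊢
        exact this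
    rw [integral_exp_mul_complex hc]
    have he : Complex.exp (2 * π * Complex.I * ((x:ℂ) - n))
        = Complex.exp (2 * π * Complex.I * x) := by
      rw [show 2 * (π:ℂ) * Complex.I * ((x:ℂ) - n)
          = 2 * π * Complex.I * x + (((-n : ℤ) : ℂ)) * (2 * π * Complex.I) by push_cast; ring,
        Complex.exp_add, Complex.exp_int_mul_two_pi_mul_I, mul_one]
    push_cast
    norm_num [he]
  have hnormc : ∀ n : ℤ, ‖fourierCoeff f n‖ ^ 2
      = Real.sin (π * x) ^ 2 / π ^ 2 * (1 / (x - (n:ℝ)) ^ 2) := by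
    intro n
    rw [hcoeff2 n, norm_div, div_pow]
    have hA : ‖Complex.exp (2 * π * Complex.I * x) - 1‖ ^ 2 = 4 * Real.sin (π * x) ^ 2 := by
      rw [show (2 * (π:ℂ) * Complex.I * x) = ((2 * π * x : ℝ) : ℂ) * Complex.I by
        push_cast; ring, Complex.exp_mul_I]
      have : Complex.cos ((2 * π * x : ℝ) : ℂ) + Complex.sin ((2 * π * x : ℝ) : ℂ) * Complex.I - 1
          = ((Real.cos (2 * π * x) - 1 : ℝ) : ℂ) + ((Real.sin (2 * π * x) : ℝ) : ℂ) * Complex.I := by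
        push_cast [Complex.ofReal_cos, Complex.ofReal_sin]
        ring
      rw [this, Complex.sq_norm, Complex.normSq_add_mul_I]
      have h1 : Real.cos (2 * (π * x)) = 2 * Real.cos (π * x) ^ 2 - 1 := Real.cos_two_mul _
      have h2 : Real.sin (2 * (π * x)) ^ 2 + Real.cos (2 * (π * x)) ^ 2 = 1 :=
        Real.sin_sq_add_cos_sq _
      have h3 : Real.sin (π * x) ^ 2 + Real.cos (π * x) ^ 2 = 1 := Real.sin_sq_add_cos_sq _
      have e : 2 * π * x = 2 * (π * x) := by ring
      rw [e]
      nlinarith [h1, h2, h3]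
    have hB : ‖2 * (π:ℂ) * Complex.I * ((x:ℂ) - n)‖ ^ 2 = 4 * π ^ 2 * (x - (n:ℝ)) ^ 2 := by
      have : (2 * (π:ℂ) * Complex.I * ((x:ℂ) - n)) = ((2 * π * (x - n) : ℝ) : ℂ) * Complex.I := by
        push_cast; ring
      rw [this, norm_mul, Complex.norm_I,
        Complex.norm_real, Real.norm_eq_abs, mul_one]
      rw [_root_.sq_abs]
      ring
    rw [hA, hB]
    have hπ : (π:ℝ) ≠ 0 := Real.pi_ne_zero
    have hxn' := hxn n
    field_simp
  -- assemble
  rw [hRHS] at parseval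
  have parseval2 : ∑' n : ℤ, Real.sin (π * x) ^ 2 / π ^ 2 * (1 / (x - (n:ℝ)) ^ 2) = 1 := by
    calc ∑' n : ℤ, Real.sin (π * x) ^ 2 / π ^ 2 * (1 / (x - (n:ℝ)) ^ 2)
        = ∑' n : ℤ, ‖fourierCoeff (⇑F) n‖ ^ 2 :=
          tsum_congr fun n => by rw [hcoeff n, hnormc n]
      _ = 1 := parseval
  rw [tsum_mul_left] at parseval2
  have hsin : Real.sin (π * x) ≠ 0 := by
    refine ne_of_gt (Real.sin_pos_of_pos_of_lt_pi ?_ ?_)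
    · positivity
    · nlinarith [Real.pi_pos]
  have hsum : Summable (fun n : ℤ => 1 / (x - (n:ℝ)) ^ 2) := by
    refine Summable.of_nat_of_neg ?_ ?_
    · rw [← summable_nat_add_iff 1]
      refine (aux_summable (by linarith : (0:ℝ) < 1 - x)).congr fun n => ?_
      have : (x - ((n:ℕ) + 1 : ℤ)) ^ 2 = ((n:ℝ) + (1 - x)) ^ 2 := by push_cast; ring
      rw [← this]
      push_cast
      ring_nf
    · refine (aux_summable hx0).congr fun n => ?_
      have : (x - (-(n:ℕ) : ℤ)) ^ 2 = ((n:ℝ) + x) ^ 2 := by push_cast; ring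
      rw [this]
  have htsum : ∑' n : ℤ, 1 / (x - (n:ℝ)) ^ 2 = π ^ 2 * (1 / Real.sin (π * x)) ^ 2 := by
    have hπ : (π:ℝ) ≠ 0 := Real.pi_ne_zero
    have hK : Real.sin (π * x) ^ 2 / π ^ 2 ≠ 0 := by positivity
    field_simp at parseval2 ⊢
    linarith [parseval2]
  exact hsum.hasSum_iff.mpr htsum

lemma aux_hasSum (x : ℝ) (hx0 : 0 < x) (hx1 : x < 1) :
    HasSum (fun n : ℕ => 1 / ((n:ℝ) + x) ^ 2 + 1 / ((n:ℝ) + 1 - x) ^ 2)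
      (π ^ 2 * (1 / Real.sin (π * x)) ^ 2) := by
  have h := aux_parseval x hx0 hx1
  have h2 : HasSum (fun n : ℤ => 1 / (x + (n:ℝ)) ^ 2)
      (π ^ 2 * (1 / Real.sin (π * x)) ^ 2) := by
    have h' := ((Equiv.neg ℤ).hasSum_iff).mpr h
    have e1 : ((fun n : ℤ => (1:ℝ) / (x - (n:ℝ)) ^ 2) ∘ (Equiv.neg ℤ))
        = fun n : ℤ => 1 / (x + (n:ℝ)) ^ 2 := by
      funext n
      simp only [Function.comp, Equiv.neg_apply]
      push_cast
      ring_nf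
    rwa [e1] at h'
  have h3 := h2.nat_add_neg_add_one
  have e2 : (fun n : ℕ => 1 / (x + ((n:ℤ):ℝ)) ^ 2 + 1 / (x + ((-((n:ℤ) + 1) : ℤ) : ℝ)) ^ 2)
      = fun n : ℕ => 1 / ((n:ℝ) + x) ^ 2 + 1 / ((n:ℝ) + 1 - x) ^ 2 := by
    funext n
    push_cast
    ring_nf
  rwa [e2] at h3

lemma aux_integral (x : ℝ) (hx0 : 0 < x) (hx1 : x < 1) :
    ∫ u in Set.Ioo (0:ℝ) 1, (-Real.log u) / (1 - u) * (u ^ (x - 1) + u ^ (-x))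
      = π ^ 2 * (1 / Real.sin (π * x)) ^ 2 := by
  set f : ℕ → ℝ → ℝ :=
    fun n u => u ^ ((n:ℝ) + x - 1) * (-Real.log u) + u ^ ((n:ℝ) - x) * (-Real.log u) with hfdef
  have hb1 : ∀ n : ℕ, (-1:ℝ) < (n:ℝ) + x - 1 := fun n => by
    have := Nat.cast_nonneg (α := ℝ) n; linarith
  have hb2 : ∀ n : ℕ, (-1:ℝ) < (n:ℝ) - x := fun n => by
    have := Nat.cast_nonneg (α := ℝ) n; linarith
  have hii : ∀ b : ℝ, -1 < b →
      IntegrableOn (fun u : ℝ => u ^ b * (-Real.log u)) (Set.Ioo (0:ℝ) 1) :=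
    fun b hb => (aux_ii hb).mono_set Set.Ioo_subset_Ioc_self
  have hfint : ∀ n : ℕ, IntegrableOn (f n) (Set.Ioo (0:ℝ) 1) :=
    fun n => (hii _ (hb1 n)).add (hii _ (hb2 n))
  have hIoo : ∀ b : ℝ, -1 < b →
      ∫ u in Set.Ioo (0:ℝ) 1, u ^ b * (-Real.log u) = 1 / (b + 1) ^ 2 := by
    intro b hb
    rw [← MeasureTheory.integral_Ioc_eq_integral_Ioo,
      ← intervalIntegral.integral_of_le zero_le_one]
    exact aux_eval hb
  have hval : ∀ n : ℕ, ∫ u in Set.Ioo (0:ℝ) 1, f n u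
      = 1 / ((n:ℝ) + x) ^ 2 + 1 / ((n:ℝ) + 1 - x) ^ 2 := by
    intro n
    rw [hfdef]
    rw [MeasureTheory.integral_add (hii _ (hb1 n)) (hii _ (hb2 n))]
    rw [hIoo _ (hb1 n), hIoo _ (hb2 n)]
    ring_nf
  have hsummable : Summable (fun n : ℕ => 1 / ((n:ℝ) + x) ^ 2 + 1 / ((n:ℝ) + 1 - x) ^ 2) :=
    (aux_hasSum x hx0 hx1).summable
  have hnonneg : ∀ n : ℕ, ∀ u ∈ Set.Ioo (0:ℝ) 1, 0 ≤ f n u := by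
    intro n u hu
    have hlog : 0 ≤ -Real.log u := by simpa using Real.log_nonpos hu.1.le hu.2.le
    have := Real.rpow_nonneg hu.1.le ((n:ℝ) + x - 1)
    have := Real.rpow_nonneg hu.1.le ((n:ℝ) - x)
    positivity
  have hmeas : ∀ n : ℕ, AEStronglyMeasurable (f n) (volume.restrict (Set.Ioo (0:ℝ) 1)) :=
    fun n => (hfint n).aestronglyMeasurable
  have hlint : ∀ n : ℕ, (∫⁻ u in Set.Ioo (0:ℝ) 1, ‖f n u‖ₑ)
      = ENNReal.ofReal (1 / ((n:ℝ) + x) ^ 2 + 1 / ((n:ℝ) + 1 - x) ^ 2) := by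
    intro n
    rw [← hval n, MeasureTheory.ofReal_integral_eq_lintegral_ofReal (hfint n)
      ((MeasureTheory.ae_restrict_iff' measurableSet_Ioo).mpr
        (Filter.Eventually.of_forall (hnonneg n)))]
    refine MeasureTheory.lintegral_congr_ae ?_
    filter_upwards [MeasureTheory.ae_restrict_mem measurableSet_Ioo] with u hu
    rw [← ofReal_norm, Real.norm_of_nonneg (hnonneg n u hu)]
  have hswap : ∫ u in Set.Ioo (0:ℝ) 1, (∑' n : ℕ, f n u)
      = ∑' n : ℕ, ∫ u in Set.Ioo (0:ℝ) 1, f n u := by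
    refine MeasureTheory.integral_tsum hmeas ?_
    have : (∑' n : ℕ, ∫⁻ u in Set.Ioo (0:ℝ) 1, ‖f n u‖ₑ)
        = ∑' n : ℕ, ENNReal.ofReal (1 / ((n:ℝ) + x) ^ 2 + 1 / ((n:ℝ) + 1 - x) ^ 2) :=
      tsum_congr hlint
    rw [this, ← ENNReal.ofReal_tsum_of_nonneg (fun n => by positivity) hsummable]
    exact ENNReal.ofReal_ne_top
  have hpt : ∀ u ∈ Set.Ioo (0:ℝ) 1,
      (∑' n : ℕ, f n u) = (-Real.log u) / (1 - u) * (u ^ (x - 1) + u ^ (-x)) := by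
    intro u hu
    have hu0 : (0:ℝ) < u := hu.1
    have hu1 : u < 1 := hu.2
    have hgeo : HasSum (fun n : ℕ => ((-Real.log u) * (u ^ (x - 1) + u ^ (-x))) * u ^ (n:ℕ))
        (((-Real.log u) * (u ^ (x - 1) + u ^ (-x))) * (1 - u)⁻¹) :=
      (hasSum_geometric_of_lt_one hu0.le hu1).mul_left _
    have hterm : ∀ n : ℕ, ((-Real.log u) * (u ^ (x - 1) + u ^ (-x))) * u ^ (n:ℕ) = f n u := by
      intro n
      have e1 : u ^ ((n:ℝ) + x - 1) = u ^ (n:ℕ) * u ^ (x - 1) := by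
        rw [← Real.rpow_natCast u n, ← Real.rpow_add hu0]
        ring_nf
      have e2 : u ^ ((n:ℝ) - x) = u ^ (n:ℕ) * u ^ (-x) := by
        rw [← Real.rpow_natCast u n, ← Real.rpow_add hu0]
        ring_nf
      rw [hfdef]
      simp only [e1, e2]
      ring
    rw [funext hterm] at hgeo
    rw [hgeo.tsum_eq]
    ring
  rw [MeasureTheory.setIntegral_congr_fun measurableSet_Ioo
    (fun u hu => (hpt u hu).symm), hswap]
  rw [tsum_congr hval]
  exact (aux_hasSum x hx0 hx1).tsum_eq

end helpers


open Real

theorem csc_sq_integral_repr (x : ℝ) (hx0 : 0 < x) (hx1 : x < 1) :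
    π ^ 2 * (1 / Real.sin (π * x)) ^ 2 =
      -∫ u in (0:ℝ)..1, Real.log u / (1 - u) * (u ^ (x - 1) + u ^ (-x)) := by
  rw [intervalIntegral.integral_of_le zero_le_one,
    MeasureTheory.integral_Ioc_eq_integral_Ioo, ← aux_integral x hx0 hx1,
    ← MeasureTheory.integral_neg]
  refine MeasureTheory.integral_congr_ae (Filter.Eventually.of_forall fun u => ?_)
  ring
end

section
/- For every positive integer v ≥ 1 and all z with sin z ≠ 0, ∏_{n=1}^{v−1} (∂_z² + 4n²) applied to csc² z equals (2v−1)! · csc^{2v} z. -/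
open Real

/-- The composition of the operators `∂² + 4 n²` for `n = 1, …, v - 1`. -/
noncomputable def cscOps (v : ℕ) (f : ℝ → ℝ) : ℝ → ℝ :=
  (List.range' 1 (v - 1)).foldr
    (fun n g => fun z => iteratedDeriv 2 g z + 4 * (n : ℝ) ^ 2 * g z) f

namespace CscAux

open Polynomial

/-- The conjugated second derivative operator acting on polynomials in `u = csc²`. -/
noncomputable def DD (P : ℝ[X]) : ℝ[X] :=
  4 * X ^ 2 * (X - 1) * derivative (derivative P) + (6 * X ^ 2 - 4 * X) * derivative P

/-- The operator `∂² + 4 n²` on the polynomial side. -/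
noncomputable def BB (n : ℕ) (P : ℝ[X]) : ℝ[X] := DD P + C (4 * (n : ℝ) ^ 2) * P

lemma DD_add (P Q : ℝ[X]) : DD (P + Q) = DD P + DD Q := by
  simp only [DD, derivative_add]; ring

lemma DD_C_mul (c : ℝ) (P : ℝ[X]) : DD (C c * P) = C c * DD P := by
  simp only [DD, derivative_C_mul]; ring

lemma BB_C_mul (n : ℕ) (c : ℝ) (P : ℝ[X]) : BB n (C c * P) = C c * BB n P := by
  simp only [BB, DD_C_mul]; ring

lemma BB_comm (n m : ℕ) (P : ℝ[X]) : BB n (BB m P) = BB m (BB n P) := by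
  simp only [BB, DD_add, DD_C_mul]; ring

lemma foldr_BB_comm (n : ℕ) (L : List ℕ) (P : ℝ[X]) :
    BB n (L.foldr BB P) = L.foldr BB (BB n P) := by
  induction L with
  | nil => rfl
  | cons m L ih =>
      simp only [List.foldr_cons]
      rw [BB_comm, ih]

lemma foldr_BB_C_mul (c : ℝ) (L : List ℕ) (P : ℝ[X]) :
    L.foldr BB (C c * P) = C c * L.foldr BB P := by
  induction L with
  | nil => rfl
  | cons m L ih =>
      simp only [List.foldr_cons]
      rw [ih, BB_C_mul]

lemma BB_X_pow (k : ℕ) (hk : 1 ≤ k) :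
    BB k (X ^ k) = C ((2 * k) * (2 * k + 1) : ℝ) * X ^ (k + 1) := by
  obtain ⟨j, rfl⟩ : ∃ j, k = j + 1 := ⟨k - 1, by omega⟩
  cases j with
  | zero =>
      simp only [BB, DD, zero_add, pow_one, derivative_X, derivative_one, map_one, mul_one,
        Nat.cast_one, one_pow]
      push_cast
      simp only [map_add, map_mul, map_pow, map_ofNat, map_one]
      ring
  | succ i =>
      have hder2 : derivative (derivative (X ^ (i + 1 + 1) : ℝ[X]))
          = C (((i : ℝ) + 2) * ((i : ℝ) + 1)) * X ^ i := by
        rw [derivative_X_pow, derivative_C_mul, derivative_X_pow]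
        norm_num
        simp only [map_ofNat]
        ring
      rw [BB, DD, hder2, derivative_X_pow]
      simp only [Nat.add_sub_cancel]
      push_cast
      simp only [map_add, map_mul, map_pow, map_ofNat, map_one]
      ring

def coef : ℕ → ℕ → ℕ
  | _, 0 => 1
  | k, (m + 1) => (2 * k) * (2 * k + 1) * coef (k + 1) m

lemma poly_main : ∀ (m k : ℕ), 1 ≤ k →
    (List.range' k m).foldr BB (X ^ k) = C (coef k m : ℝ) * X ^ (k + m) := by
  intro m
  induction m with
  | zero => intro k hk; simp [coef]
  | succ m ih =>
      intro k hk
      rw [List.range'_succ, List.foldr_cons, foldr_BB_comm, BB_X_pow k hk,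
        foldr_BB_C_mul, ih (k + 1) (by omega), coef]
      rw [← mul_assoc, ← C_mul, show k + 1 + m = k + (m + 1) by omega]
      congr 1
      push_cast
      ring

lemma coef_fact : ∀ (m k : ℕ), 1 ≤ k →
    coef k m * (2 * k - 1).factorial = (2 * (k + m) - 1).factorial := by
  intro m
  induction m with
  | zero => intro k hk; simp [coef]
  | succ m ih =>
      intro k hk
      have h1 : (2 * (k + 1) - 1).factorial
          = (2 * k + 1) * ((2 * k) * (2 * k - 1).factorial) := by
        have h2 : 2 * (k + 1) - 1 = (2 * k - 1) + 1 + 1 := by omega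
        rw [h2, Nat.factorial_succ, Nat.factorial_succ]
        have h3 : 2 * k - 1 + 1 = 2 * k := by omega
        rw [h3]
      have h4 := ih (k + 1) (by omega)
      rw [coef]
      calc (2 * k) * (2 * k + 1) * coef (k + 1) m * (2 * k - 1).factorial
          = coef (k + 1) m * ((2 * k + 1) * ((2 * k) * (2 * k - 1).factorial)) := by ring
        _ = coef (k + 1) m * (2 * (k + 1) - 1).factorial := by rw [h1]
        _ = (2 * (k + 1 + m) - 1).factorial := h4
        _ = (2 * (k + (m + 1)) - 1).factorial := by ring_nf

/-! ### Analytic part -/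

lemma scalar_id (s c a b : ℝ) (hs : s ≠ 0) (hc : c ^ 2 = 1 - s ^ 2) :
    4 * ((1 / s) ^ 2) ^ 2 * ((1 / s) ^ 2 - 1) * a + (6 * ((1 / s) ^ 2) ^ 2 - 4 * (1 / s) ^ 2) * b
      = a * (-2 * c / s ^ 3) * (-2 * c / s ^ 3)
        + b * ((-2 * -s * s ^ 3 - -2 * c * (3 * s ^ 2 * c)) / (s ^ 3) ^ 2) := by
  field_simp
  linear_combination (-(4 * a) - 6 * b * s ^ 2) * hc

lemma hasDerivAt_u (z : ℝ) (hz : Real.sin z ≠ 0) :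
    HasDerivAt (fun y => (1 / Real.sin y) ^ 2) (-2 * Real.cos z / Real.sin z ^ 3) z := by
  have hinv : HasDerivAt (fun y => (Real.sin y)⁻¹) (-Real.cos z / Real.sin z ^ 2) z :=
    (Real.hasDerivAt_sin z).inv hz
  have h := hinv.pow 2
  norm_num at h
  have heq : 2 * (Real.sin z)⁻¹ * (-Real.cos z / Real.sin z ^ 2)
      = -2 * Real.cos z / Real.sin z ^ 3 := by
    field_simp
  rw [heq] at h
  simpa [one_div, inv_pow, Pi.pow_def] using h

lemma hasDerivAt_evalQ (Q : ℝ[X]) (z : ℝ) (hz : Real.sin z ≠ 0) :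
    HasDerivAt (fun y => Q.eval ((1 / Real.sin y) ^ 2))
      (Q.derivative.eval ((1 / Real.sin z) ^ 2) * (-2 * Real.cos z / Real.sin z ^ 3)) z :=
  (Q.hasDerivAt _).comp z (hasDerivAt_u z hz)

/-- The first derivative of `Q(csc²)` as an explicit function. -/
noncomputable def hfun (Q : ℝ[X]) (y : ℝ) : ℝ :=
  Q.derivative.eval ((1 / Real.sin y) ^ 2) * (-2 * Real.cos y / Real.sin y ^ 3)

lemma hasDerivAt_hfun (Q : ℝ[X]) (z : ℝ) (hz : Real.sin z ≠ 0) :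
    HasDerivAt (hfun Q) ((DD Q).eval ((1 / Real.sin z) ^ 2)) z := by
  have hA := hasDerivAt_evalQ Q.derivative z hz
  have hnum : HasDerivAt (fun y => -2 * Real.cos y) (-2 * -Real.sin z) z :=
    (Real.hasDerivAt_cos z).const_mul _
  have hden : HasDerivAt (fun y => Real.sin y ^ 3) (3 * Real.sin z ^ 2 * Real.cos z) z := by
    have h3 := (Real.hasDerivAt_sin z).fun_pow 3
    simpa using h3
  have hB : HasDerivAt (fun y => -2 * Real.cos y / Real.sin y ^ 3)
      ((-2 * -Real.sin z * Real.sin z ^ 3 -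
        -2 * Real.cos z * (3 * Real.sin z ^ 2 * Real.cos z)) / (Real.sin z ^ 3) ^ 2) z :=
    hnum.div hden (pow_ne_zero _ hz)
  have h := hA.fun_mul hB
  have hc : Real.cos z ^ 2 = 1 - Real.sin z ^ 2 := by
    have := Real.sin_sq_add_cos_sq z
    linarith
  refine h.congr_deriv ?_
  simp only [DD, eval_add, eval_mul, eval_pow, eval_X, eval_sub, eval_one, eval_ofNat]
  exact (scalar_id (Real.sin z) (Real.cos z) _ _ hz hc).symm

lemma mem_nhds_S {z : ℝ} (hz : Real.sin z ≠ 0) : {y : ℝ | Real.sin y ≠ 0} ∈ nhds z := by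
  have : IsOpen {y : ℝ | Real.sin y ≠ 0} :=
    isOpen_compl_singleton.preimage Real.continuous_sin
  exact this.mem_nhds hz

lemma iteratedDeriv_two (f : ℝ → ℝ) : iteratedDeriv 2 f = deriv (deriv f) := by
  rw [show (2 : ℕ) = 1 + 1 from rfl, iteratedDeriv_succ, iteratedDeriv_one]

lemma iteratedDeriv_two_eval (Q : ℝ[X]) (z : ℝ) (hz : Real.sin z ≠ 0) :
    iteratedDeriv 2 (fun y => Q.eval ((1 / Real.sin y) ^ 2)) z
      = (DD Q).eval ((1 / Real.sin z) ^ 2) := by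
  have h1 : deriv (fun y => Q.eval ((1 / Real.sin y) ^ 2)) =ᶠ[nhds z] hfun Q := by
    filter_upwards [mem_nhds_S hz] with y hy
    exact (hasDerivAt_evalQ Q y hy).deriv
  rw [iteratedDeriv_two, h1.deriv_eq]
  exact (hasDerivAt_hfun Q z hz).deriv

lemma iteratedDeriv_two_congr {f g : ℝ → ℝ}
    (h : ∀ y, Real.sin y ≠ 0 → f y = g y) (z : ℝ) (hz : Real.sin z ≠ 0) :
    iteratedDeriv 2 f z = iteratedDeriv 2 g z := by
  have hd : ∀ y, Real.sin y ≠ 0 → deriv f y = deriv g y := by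
    intro y hy
    apply Filter.EventuallyEq.deriv_eq
    filter_upwards [mem_nhds_S hy] with w hw
    exact h w hw
  rw [iteratedDeriv_two, iteratedDeriv_two]
  apply Filter.EventuallyEq.deriv_eq
  filter_upwards [mem_nhds_S hz] with w hw
  exact hd w hw

lemma fold_eq (L : List ℕ) (P : ℝ[X]) :
    ∀ z, Real.sin z ≠ 0 →
      (L.foldr (fun (n : ℕ) (g : ℝ → ℝ) => fun z => iteratedDeriv 2 g z + 4 * (n : ℝ) ^ 2 * g z)
          (fun y => P.eval ((1 / Real.sin y) ^ 2))) z
        = (L.foldr BB P).eval ((1 / Real.sin z) ^ 2) := by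
  induction L with
  | nil => intro z hz; rfl
  | cons n L ih =>
      intro z hz
      simp only [List.foldr_cons]
      have h2 : iteratedDeriv 2
          (L.foldr (fun (n : ℕ) (g : ℝ → ℝ) =>
              fun z => iteratedDeriv 2 g z + 4 * (n : ℝ) ^ 2 * g z)
            (fun y => P.eval ((1 / Real.sin y) ^ 2))) z
          = (DD (L.foldr BB P)).eval ((1 / Real.sin z) ^ 2) := by
        rw [iteratedDeriv_two_congr ih z hz]
        exact iteratedDeriv_two_eval _ z hz
      rw [h2, ih z hz]
      simp [BB]

lemma cscOps_eq (v : ℕ) (f : ℝ → ℝ) :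
    cscOps v f = (List.range' 1 (v - 1)).foldr
      (fun (n : ℕ) (g : ℝ → ℝ) => fun z => iteratedDeriv 2 g z + 4 * (n : ℝ) ^ 2 * g z) f := by
  unfold cscOps
  generalize List.range' 1 (v - 1) = L
  induction L with
  | nil => rfl
  | cons a l ih =>
      simp only [List.flatMap_cons, List.singleton_append, List.foldr_cons, List.foldr_append]
      rw [← ih]
      rfl

end CscAux

theorem csc_ops_identity (v : ℕ) (hv : 1 ≤ v) (z : ℝ) (hz : Real.sin z ≠ 0) :
    cscOps v (fun y => (1 / Real.sin y) ^ 2) z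
      = (2 * v - 1).factorial * (1 / Real.sin z) ^ (2 * v) := by
  have hfun : (fun y => (1 / Real.sin y) ^ 2)
      = fun y => (Polynomial.X ^ 1 : Polynomial ℝ).eval ((1 / Real.sin y) ^ 2) := by
    funext y; simp
  rw [CscAux.cscOps_eq, hfun, CscAux.fold_eq _ _ z hz, CscAux.poly_main (v - 1) 1 le_rfl]
  have hco : CscAux.coef 1 (v - 1) = (2 * v - 1).factorial := by
    have h := CscAux.coef_fact (v - 1) 1 le_rfl
    have h1 : 2 * (1 + (v - 1)) - 1 = 2 * v - 1 := by omega
    simpa [h1] using h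
  rw [hco]
  have h2 : 1 + (v - 1) = v := by omega
  rw [h2]
  simp only [Polynomial.eval_mul, Polynomial.eval_C, Polynomial.eval_pow, Polynomial.eval_X]
  rw [← pow_mul]
end

section
/- For every positive integer m, Σ_{k=1}^{m-1} csc⁴(kπ/m) = (m² − 1)(m² + 11)/45. -/
open Real Finset Polynomial Polynomial.Chebyshev

lemma cheb_evals : ∀ n : ℕ,
    (U ℝ n).eval 1 = (n:ℝ)+1 ∧
    (derivative (U ℝ n)).eval 1 = (n:ℝ)*((n:ℝ)+1)*((n:ℝ)+2)/3 ∧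
    (derivative (derivative (U ℝ n))).eval 1
      = ((n:ℝ)-1)*(n:ℝ)*((n:ℝ)+1)*((n:ℝ)+2)*((n:ℝ)+3)/15 := by
  intro n
  induction n using Nat.strong_induction_on with
  | _ n ih =>
    match n with
    | 0 => norm_num [U_zero]
    | 1 => norm_num [U_one]
    | (k+2) =>
      obtain ⟨h1, h2, h3⟩ := ih (k+1) (by omega)
      obtain ⟨g1, g2, g3⟩ := ih k (by omega)
      have hU : U ℝ ((k:ℤ)+2) = 2 * X * U ℝ ((k:ℤ)+1) - U ℝ (k:ℤ) := U_add_two ℝ k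
      have hc : ((k+2:ℕ):ℤ) = (k:ℤ)+2 := by push_cast; ring
      push_cast at h1 h2 h3
      rw [hc, hU]
      refine ⟨?_, ?_, ?_⟩
      · simp only [eval_sub, eval_mul, eval_ofNat, eval_X, h1, g1]
        push_cast; ring
      · simp only [derivative_sub, derivative_mul, derivative_ofNat, derivative_X,
          eval_sub, eval_add, eval_mul, eval_ofNat, eval_X, eval_zero, eval_one,
          h1, h2, g2]
        push_cast; ring
      · simp only [derivative_sub, derivative_add, derivative_mul, derivative_ofNat, derivative_X,
          derivative_zero, derivative_one, eval_sub, eval_add, eval_mul, eval_ofNat,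
          eval_X, eval_zero, eval_one, h1, h2, h3, g3]
        push_cast; ring


lemma cheb_coeff_deg : ∀ n : ℕ, (U ℝ n).coeff n = 2^n ∧ (U ℝ n).natDegree ≤ n := by
  intro n
  induction n using Nat.strong_induction_on with
  | _ n ih =>
    match n with
    | 0 => norm_num [U_zero]
    | 1 =>
      rw [show ((1:ℕ):ℤ) = 1 from rfl]
      constructor
      · rw [U_one]
        have : (2 * X : ℝ[X]) = C 2 * X := by rw [map_ofNat]
        rw [this, coeff_C_mul, coeff_X_one]; norm_num
      · rw [U_one]
        have : (2 * X : ℝ[X]) = C 2 * X := by rw [map_ofNat]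
        rw [this]
        exact le_trans (natDegree_C_mul_le _ _) (by simp)
    | (k+2) =>
      obtain ⟨h1, h2⟩ := ih (k+1) (by omega)
      obtain ⟨g1, g2⟩ := ih k (by omega)
      have hU : U ℝ ((k:ℤ)+2) = 2 * X * U ℝ ((k:ℤ)+1) - U ℝ (k:ℤ) := U_add_two ℝ k
      have hc : ((k+2:ℕ):ℤ) = (k:ℤ)+2 := by push_cast; ring
      push_cast at h1 h2
      rw [hc, hU]
      have hmul : (2 * X * U ℝ ((k:ℤ)+1) : ℝ[X]) = C 2 * (X * U ℝ ((k:ℤ)+1)) := by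
        rw [map_ofNat]; ring
      constructor
      · rw [coeff_sub, hmul, coeff_C_mul, coeff_X_mul, h1,
          coeff_eq_zero_of_natDegree_lt (lt_of_le_of_lt g2 (by omega))]
        ring
      · refine le_trans (natDegree_sub_le _ _) (max_le ?_ (le_trans g2 (by omega)))
        rw [hmul]
        refine le_trans (natDegree_C_mul_le _ _) ?_
        calc natDegree (X * U ℝ ((k:ℤ)+1)) ≤ 1 + natDegree (U ℝ ((k:ℤ)+1)) := by
                simpa using natDegree_mul_le (p := (X:ℝ[X]))
          _ ≤ k + 2 := by omega

lemma deriv_prod_lin (s : Finset ℕ) (f : ℕ → ℝ) :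
    derivative (∏ i ∈ s, (X - C (f i))) = ∑ i ∈ s, ∏ j ∈ s.erase i, (X - C (f j)) := by
  classical
  induction s using Finset.induction_on with
  | empty => simp
  | @insert a s ha ih =>
    rw [Finset.prod_insert ha, derivative_mul, derivative_X_sub_C, ih, Finset.sum_insert ha,
      Finset.erase_insert ha, one_mul, Finset.mul_sum]
    congr 1
    refine Finset.sum_congr rfl fun i hi => ?_
    rw [Finset.erase_insert_of_ne (by rintro rfl; exact ha hi),
      Finset.prod_insert (fun h => ha (Finset.mem_of_mem_erase h))]


set_option maxHeartbeats 2000000 in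
lemma dowker_aux (m : ℕ) (hm : 2 ≤ m) :
    ∑ k ∈ Finset.Icc 1 (m - 1), (1 / Real.sin (k * π / m)) ^ 4 =
      ((m : ℝ) ^ 2 - 1) * ((m : ℝ) ^ 2 + 11) / 45 := by
  classical
  have hm1 : 1 ≤ m := by omega
  set M : ℝ := (m:ℝ) with hMdef
  have hM2 : (2:ℝ) ≤ M := by rw [hMdef]; exact_mod_cast hm
  have hM0 : M ≠ 0 := by linarith
  set s : Finset ℕ := Finset.Icc 1 (m-1) with hsdef
  set c : ℕ → ℝ := fun k => Real.cos (k * π / m) with hcdef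
  set n : ℕ := m - 1 with hndef
  have hns : (n:ℝ) = M - 1 := by rw [hndef, Nat.cast_sub hm1]; norm_num [hMdef]
  have hcard : s.card = n := by rw [hsdef, Nat.card_Icc]; omega
  -- angles in (0, π)
  have hθ : ∀ k ∈ s, 0 < (k:ℝ) * π / m ∧ (k:ℝ) * π / m < π := by
    intro k hk
    rw [hsdef, Finset.mem_Icc] at hk
    have hk1 : (1:ℝ) ≤ (k:ℝ) := by exact_mod_cast hk.1
    have hkm : (k:ℝ) < M := by
      have : k < m := by omega
      rw [hMdef]; exact_mod_cast this
    constructor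
    · apply div_pos (by positivity) (by linarith)
    · rw [div_lt_iff₀ (by linarith)]
      nlinarith [pi_pos]
  have hsin : ∀ k ∈ s, 0 < Real.sin ((k:ℝ) * π / m) := fun k hk =>
    Real.sin_pos_of_pos_of_lt_pi (hθ k hk).1 (hθ k hk).2
  have h1c : ∀ k ∈ s, 0 < 1 - c k := by
    intro k hk
    have h1 := hsin k hk
    have h2 := Real.sin_sq_add_cos_sq ((k:ℝ) * π / m)
    simp only [hcdef]
    nlinarith
  have h1c' : ∀ k ∈ s, 0 < 1 + c k := by
    intro k hk
    have h1 := hsin k hk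
    have h2 := Real.sin_sq_add_cos_sq ((k:ℝ) * π / m)
    simp only [hcdef]
    nlinarith
  -- injectivity of c on s
  have hinj : Set.InjOn c s := by
    intro k hk l hl h
    have hθk := hθ k hk
    have hθl := hθ l hl
    have := Real.injOn_cos ⟨le_of_lt hθk.1, le_of_lt hθk.2⟩ ⟨le_of_lt hθl.1, le_of_lt hθl.2⟩ h
    field_simp at this
    norm_cast at this
  -- the polynomial P
  set P : ℝ[X] := ∏ k ∈ s, (X - C (c k)) with hPdef
  have hPmonic : P.Monic := monic_prod_of_monic _ _ fun k _ => monic_X_sub_C _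
  have hPdeg : P.natDegree = n := by
    rw [hPdef, natDegree_prod_of_monic _ _ fun k _ => monic_X_sub_C _]
    simp [hcard]
  have hPeval : ∀ k ∈ s, P.eval (c k) = 0 := by
    intro k hk
    rw [hPdef, eval_prod]
    exact Finset.prod_eq_zero hk (by simp)
  -- U vanishes at the c k
  have hUeval : ∀ k ∈ s, (U ℝ (n:ℤ)).eval (c k) = 0 := by
    intro k hk
    have h := U_real_cos ((k:ℝ) * π / m) (n:ℤ)
    have hang : (((n:ℤ):ℝ) + 1) * ((k:ℝ) * π / m) = (k:ℝ) * π := by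
      push_cast
      rw [hns]
      field_simp
      rw [hMdef]; ring
    rw [hang] at h
    have hz : Real.sin ((k:ℝ) * π) = 0 := by
      exact_mod_cast Real.sin_nat_mul_pi k
    rw [hz] at h
    have := hsin k hk
    have := mul_eq_zero.mp h
    rcases this with h' | h'
    · exact h'
    · linarith
  -- product formula
  have hUP : U ℝ (n:ℤ) = C ((2:ℝ)^n) * P := by
    set D : ℝ[X] := U ℝ (n:ℤ) - C ((2:ℝ)^n) * P with hDdef
    have hDeval : ∀ x ∈ s.image c, D.eval x = 0 := by
      intro x hx
      obtain ⟨k, hk, rfl⟩ := Finset.mem_image.mp hx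
      rw [hDdef]
      simp [hUeval k hk, hPeval k hk]
    have hDcoeff : D.coeff n = 0 := by
      rw [hDdef, coeff_sub, (cheb_coeff_deg n).1, coeff_C_mul, ← hPdeg,
        hPmonic.coeff_natDegree]
      ring
    have hDdeg : D.natDegree ≤ n := by
      refine le_trans (natDegree_sub_le _ _) (max_le (cheb_coeff_deg n).2 ?_)
      exact le_trans (natDegree_C_mul_le _ _) (le_of_eq hPdeg)
    by_cases hD : D = 0
    · have := sub_eq_zero.mp (hDdef ▸ hD)
      exact this
    · exfalso
      apply hD
      apply Polynomial.eq_zero_of_natDegree_lt_card_of_eval_eq_zero' D (s.image c) hDeval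
      rw [Finset.card_image_of_injOn hinj, hcard]
      rcases lt_or_eq_of_le hDdeg with h | h
      · exact h
      · exfalso
        apply hD
        rw [← Polynomial.leadingCoeff_eq_zero, Polynomial.leadingCoeff, h]
        exact hDcoeff
  -- abbreviations
  set x : ℕ → ℝ := fun k => (1 - c k)⁻¹ with hxdef
  set y : ℕ → ℝ := fun k => (1 + c k)⁻¹ with hydef
  set A1 : ℝ := ∑ k ∈ s, x k with hA1def
  set A2 : ℝ := ∑ k ∈ s, (x k)^2 with hA2def
  have hP1 : P.eval 1 = ∏ k ∈ s, (1 - c k) := by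
    rw [hPdef, eval_prod]; simp
  have hP1pos : 0 < P.eval 1 := by
    rw [hP1]; exact Finset.prod_pos h1c
  have hP1ne : P.eval 1 ≠ 0 := ne_of_gt hP1pos
  have hprod_erase : ∀ k ∈ s, ∏ j ∈ s.erase k, (1 - c j) = P.eval 1 * x k := by
    intro k hk
    have h := Finset.mul_prod_erase s (fun j => 1 - c j) hk
    rw [hP1, ← h, hxdef]
    have := h1c k hk
    field_simp
  -- first derivative at 1
  have hd1 : (derivative P).eval 1 = P.eval 1 * A1 := by
    rw [hPdef, deriv_prod_lin, eval_finset_sum]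
    rw [hA1def, Finset.mul_sum]
    refine Finset.sum_congr rfl fun k hk => ?_
    rw [eval_prod]
    simp only [eval_sub, eval_X, eval_C]
    exact hprod_erase k hk
  -- second derivative at 1
  have hd2 : (derivative (derivative P)).eval 1 = P.eval 1 * (A1^2 - A2) := by
    rw [hPdef, deriv_prod_lin, map_sum]
    have : ∀ k ∈ s, (derivative (∏ j ∈ s.erase k, (X - C (c j)))).eval 1
        = P.eval 1 * (x k * (A1 - x k)) := by
      intro k hk
      rw [deriv_prod_lin, eval_finset_sum]
      have hterm : ∀ l ∈ s.erase k,
          (∏ j ∈ (s.erase k).erase l, ((X:ℝ[X]) - C (c j))).eval 1 = P.eval 1 * x k * x l := by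
        intro l hl
        have hls : l ∈ s := Finset.mem_of_mem_erase hl
        have h := Finset.mul_prod_erase (s.erase k) (fun j => 1 - c j) hl
        rw [eval_prod]
        simp only [eval_sub, eval_X, eval_C]
        rw [hprod_erase k hk] at h
        have hlpos := h1c l hls
        have hxl : x l = (1 - c l)⁻¹ := by rw [hxdef]
        rw [← h, hxl]
        field_simp
      rw [Finset.sum_congr rfl hterm, ← Finset.mul_sum, Finset.sum_erase_eq_sub hk,
        ← hA1def, mul_assoc]
    rw [eval_finset_sum, Finset.sum_congr rfl this, ← Finset.mul_sum]
    congr 1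
    simp only [mul_sub]
    rw [Finset.sum_sub_distrib, ← Finset.sum_mul, ← hA1def]
    have h2 : ∑ k ∈ s, x k * x k = A2 := by
      rw [hA2def]; exact Finset.sum_congr rfl fun k _ => (pow_two (x k)).symm
    rw [h2]; ring
  -- evaluations from Chebyshev
  obtain ⟨hu, hdu, hddu⟩ := cheb_evals n
  set a : ℝ := (2:ℝ)^n with hadef
  have hE0 : a * P.eval 1 = (n:ℝ)+1 := by rw [← hu, hUP, eval_mul, eval_C]
  have hE1 : a * (P.eval 1 * A1) = (n:ℝ)*((n:ℝ)+1)*((n:ℝ)+2)/3 := by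
    rw [← hdu, hUP, derivative_C_mul, eval_mul, eval_C, hd1]
  have hE2 : a * (P.eval 1 * (A1^2 - A2))
      = ((n:ℝ)-1)*(n:ℝ)*((n:ℝ)+1)*((n:ℝ)+2)*((n:ℝ)+3)/15 := by
    rw [← hddu, hUP, derivative_C_mul, derivative_C_mul, eval_mul, eval_C, hd2]
  rw [hns] at hE0 hE1 hE2
  have h0 : a * P.eval 1 = M := by rw [hE0]; ring
  have hA1v : A1 = (M^2-1)/3 := by
    apply mul_left_cancel₀ hM0
    have : M * A1 = a * (P.eval 1 * A1) := by rw [← h0]; ring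
    rw [this, hE1]; ring
  have hA2v : A1^2 - A2 = (M^2-1)*(M^2-4)/15 := by
    apply mul_left_cancel₀ hM0
    have : M * (A1^2 - A2) = a * (P.eval 1 * (A1^2 - A2)) := by rw [← h0]; ring
    rw [this, hE2]; ring
  -- symmetry: sums with 1 + c equal sums with 1 - c
  have hcneg : ∀ k ∈ s, c (m - k) = - c k := by
    intro k hk
    rw [hsdef, Finset.mem_Icc] at hk
    have hkm : ((m-k:ℕ):ℝ) = M - k := by
      rw [Nat.cast_sub (by omega)]
    simp only [hcdef]
    rw [hkm]
    have harg : (M - (k:ℝ)) * π / m = π - (k:ℝ) * π / m := by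
      rw [← hMdef]; field_simp
    rw [harg, Real.cos_pi_sub]
  have hmem : ∀ k ∈ s, m - k ∈ s := by
    intro k hk
    rw [hsdef, Finset.mem_Icc] at *
    omega
  have hinv : ∀ k ∈ s, m - (m - k) = k := by
    intro k hk
    rw [hsdef, Finset.mem_Icc] at hk
    omega
  have hBsum : ∀ g : ℝ → ℝ, ∑ k ∈ s, g (1 + c k) = ∑ k ∈ s, g (1 - c k) := by
    intro g
    refine Finset.sum_nbij' (fun k => m - k) (fun k => m - k) hmem hmem hinv hinv ?_
    intro k hk
    rw [hcneg k hk, sub_neg_eq_add]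
  have hBy1 : ∑ k ∈ s, y k = A1 := by
    simpa only [hydef, hxdef, hA1def] using hBsum (fun t : ℝ => t⁻¹)
  have hBy2 : ∑ k ∈ s, (y k)^2 = A2 := by
    simpa only [hydef, hxdef, hA2def] using hBsum (fun t : ℝ => (t⁻¹)^2)
  -- per-term identity
  have hterm : ∀ k ∈ s, (1 / Real.sin ((k:ℝ) * π / m)) ^ 4
      = ((x k)^2 + (y k)^2 + (x k + y k))/4 := by
    intro k hk
    have h1 := h1c k hk
    have h2 := h1c' k hk
    have h3 := hsin k hk
    have hss : Real.sin ((k:ℝ)*π/m)^2 = (1 - c k) * (1 + c k) := by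
      have := Real.sin_sq_add_cos_sq ((k:ℝ)*π/m)
      simp only [hcdef]
      nlinarith
    have hx : x k = (1 - c k)⁻¹ := by rw [hxdef]
    have hy : y k = (1 + c k)⁻¹ := by rw [hydef]
    have h4 : (1/Real.sin ((k:ℝ)*π/m))^4 = (1/((1-c k)*(1+c k)))^2 := by
      rw [← hss]; ring
    rw [h4, hx, hy]
    have e1 : (1 : ℝ) - c k ≠ 0 := ne_of_gt h1
    have e2 : (1 : ℝ) + c k ≠ 0 := ne_of_gt h2
    field_simp
    ring
  rw [Finset.sum_congr rfl hterm]
  rw [← Finset.sum_div]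
  rw [Finset.sum_add_distrib, Finset.sum_add_distrib, Finset.sum_add_distrib]
  rw [hBy2, hBy1, ← hA2def, ← hA1def]
  linear_combination ((A1 + (M^2-1)/3 + 1)/2) * hA1v - (1/2 : ℝ) * hA2v

theorem dowker_v2 (m : ℕ) (hm : 0 < m) :
    ∑ k ∈ Finset.Icc 1 (m - 1), (1 / Real.sin (k * π / m)) ^ 4 =
      ((m : ℝ) ^ 2 - 1) * ((m : ℝ) ^ 2 + 11) / 45 := by
  by_cases h : m = 1
  · subst h; norm_num
  · exact dowker_aux m (by omega)
end
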